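/- arXiv:0706.3249 — 2 statements merged into one kernel-verified Lean document; each statement's English description precedes it below -/
import Mathlib

section
/- For every k ≥ 2 and every partition μ of 2k−1, g_{(k,k−1)μ} ≤ 1. That is, for each shape μ there is at most one amenable tableau of shape μ and content (k, k−1). -/
/-!
Letters of the marked alphabet 1′ < 1 < 2′ < 2 < 3′ < 3 < ⋯ are encoded as
positive natural numbers: `2 * i - 1` encodes the marked letter i′ and `2 * i`
encodes the unmarked letter i.  The successor in the alphabet is then `· + 1`,
and the (unmarked) value of a letter `t` is `(t + 1) / 2`.
-/

/-- `l` is (the list of parts of) a partition: weakly decreasing positive parts. -/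
def IsPartitionList (l : List ℕ) : Prop :=
  l.Pairwise (· ≥ ·) ∧ ∀ x ∈ l, 0 < x

/-- `l` is a strict partition: strictly decreasing positive parts. -/
def IsStrictPartitionList (l : List ℕ) : Prop :=
  l.Pairwise (· > ·) ∧ ∀ x ∈ l, 0 < x

/-- The cells of a row-convex diagram with rows `0, …, nrows - 1`, where row `r`
occupies the columns `c` with `lo r ≤ c < hi r`.  (For the Young diagram of a
partition `μ` take `lo r = 0`, `hi r = μ_(r+1)`; for the shifted skew diagram
`λ/μ` take `lo r = r + μ_(r+1)`, `hi r = r + λ_(r+1)`.)  Rows and columns are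
0-indexed. -/
def InDiagram (nrows : ℕ) (lo hi : ℕ → ℕ) (p : ℕ × ℕ) : Prop :=
  p.1 < nrows ∧ lo p.1 ≤ p.2 ∧ p.2 < hi p.1

/-- The reading word of a filling `T`: entries read right to left along each
row, rows top to bottom. -/
def readingWord (nrows : ℕ) (lo hi : ℕ → ℕ) (T : ℕ × ℕ → ℕ) : List ℕ :=
  (List.range nrows).flatMap fun r =>
    ((List.range' (lo r) (hi r - lo r)).reverse).map fun c => T (r, c)

/-- The augmented reverse reading word: the reading word read backwards, with
every entry increased by one step in the alphabet order. -/
def augWord (nrows : ℕ) (lo hi : ℕ → ℕ) (T : ℕ × ℕ → ℕ) : List ℕ :=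
  ((readingWord nrows lo hi T).reverse).map (· + 1)

/-- A word in the marked alphabet is lattice if, reading it from the left,
whenever the number of unmarked i's read so far equals the number of unmarked
(i+1)'s read so far, the next letter is neither (i+1) (encoded `2*(i+1)`)
nor (i+1)′ (encoded `2*(i+1) - 1 = 2*i + 1`). -/
def IsLatticeWord (w : List ℕ) : Prop :=
  ∀ (p : List ℕ) (x : ℕ), p ++ [x] <+: w → ∀ i : ℕ, 1 ≤ i →
    p.count (2 * i) = p.count (2 * (i + 1)) →
      x ≠ 2 * (i + 1) ∧ x ≠ 2 * i + 1

/-- `T` is an amenable filling of the diagram determined by `nrows`, `lo`, `hi`: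
it is a genuine filling of the diagram by letters (positive inside, `0` outside),
rows and columns weakly increase, each row has at most one i′ for each i,
each column has at most one unmarked i for each i, the concatenation of the
reading word and the augmented reverse reading word is lattice, and every
occurrence of i′ in the reading word has an occurrence of i strictly later
(i.e. the rightmost i is to the right of the rightmost i′). -/
def IsAmenable (nrows : ℕ) (lo hi : ℕ → ℕ) (T : ℕ × ℕ → ℕ) : Prop :=
  (∀ p, InDiagram nrows lo hi p → 1 ≤ T p) ∧
  (∀ p, ¬ InDiagram nrows lo hi p → T p = 0) ∧
  (∀ r c, InDiagram nrows lo hi (r, c) → InDiagram nrows lo hi (r, c + 1) →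
      T (r, c) ≤ T (r, c + 1)) ∧
  (∀ r c, InDiagram nrows lo hi (r, c) → InDiagram nrows lo hi (r + 1, c) →
      T (r, c) ≤ T (r + 1, c)) ∧
  (∀ r c₁ c₂, ∀ i : ℕ, 1 ≤ i → c₁ ≠ c₂ → InDiagram nrows lo hi (r, c₁) →
      InDiagram nrows lo hi (r, c₂) →
      ¬ (T (r, c₁) = 2 * i - 1 ∧ T (r, c₂) = 2 * i - 1)) ∧
  (∀ r₁ r₂ c, ∀ i : ℕ, 1 ≤ i → r₁ ≠ r₂ → InDiagram nrows lo hi (r₁, c) →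
      InDiagram nrows lo hi (r₂, c) →
      ¬ (T (r₁, c) = 2 * i ∧ T (r₂, c) = 2 * i)) ∧
  IsLatticeWord (readingWord nrows lo hi T ++ augWord nrows lo hi T) ∧
  (∀ i : ℕ, 1 ≤ i → ∀ p : ℕ, (readingWord nrows lo hi T)[p]? = some (2 * i - 1) →
      ∃ q : ℕ, p < q ∧ (readingWord nrows lo hi T)[q]? = some (2 * i))

/-- The number of entries of a word equal to i or i′. -/
def contentAt (w : List ℕ) (i : ℕ) : ℕ :=
  w.count (2 * i) + w.count (2 * i - 1)

/-- The filling `T` has content `lam`: for every `i ≥ 1` the number of entries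
equal to i or i′ is the i-th part of `lam` (0 beyond the length of `lam`). -/
def HasContent (nrows : ℕ) (lo hi : ℕ → ℕ) (T : ℕ × ℕ → ℕ) (lam : List ℕ) : Prop :=
  ∀ i : ℕ, 1 ≤ i → contentAt (readingWord nrows lo hi T) i = lam.getD (i - 1) 0

/-- The amenable tableaux of (straight) shape `mu` and content `lam`. -/
def gSet (lam mu : List ℕ) : Set (ℕ × ℕ → ℕ) :=
  {T | IsAmenable mu.length (fun _ => 0) (fun r => mu.getD r 0) T ∧
       HasContent mu.length (fun _ => 0) (fun r => mu.getD r 0) T lam}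

/-- The Stembridge coefficient `g_{λμ}`: the number of amenable tableaux of
shape `mu` and content `lam`. -/
noncomputable def gCoeff (lam mu : List ℕ) : ℕ := (gSet lam mu).ncard

/-- The amenable shifted skew tableaux of shape `lam/mu` and content `nu`. -/
def fSet (lam mu nu : List ℕ) : Set (ℕ × ℕ → ℕ) :=
  {T | IsAmenable lam.length (fun r => r + mu.getD r 0) (fun r => r + lam.getD r 0) T ∧
       HasContent lam.length (fun r => r + mu.getD r 0) (fun r => r + lam.getD r 0) T nu}

/-- The coefficient `f^λ_{μν}`: the number of amenable shifted skew tableaux of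
shape `λ/μ` and content `ν` (this is `0` when `S(μ) ⊄ S(λ)`). -/
noncomputable def fCoeff (lam mu nu : List ℕ) : ℕ := (fSet lam mu nu).ncard

/-- The staircase `(k, k-1, …, 2, 1)` of length `k`. -/
def staircase (k : ℕ) : List ℕ := (List.range k).map fun i => k - i

/-- `μ + 1^r`: add 1 to each of the first `r` parts of `μ` (creating new parts
equal to 1 if `r` exceeds the length of `μ`). -/
def addOnes (r : ℕ) (mu : List ℕ) : List ℕ :=
  (List.range (max mu.length r)).map fun i => mu.getD i 0 + (if i < r then 1 else 0)

/-- `μ ∪ s`: insert `s` as a new part, re-sorting into weakly decreasing order. -/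
def insertPart (mu : List ℕ) (s : ℕ) : List ℕ :=
  mu.takeWhile (fun x => decide (s ≤ x)) ++ s :: mu.dropWhile (fun x => decide (s ≤ x))

/-- The conjugate partition `μ′`. -/
def conjugatePartition (mu : List ℕ) : List ℕ :=
  (List.range (mu.getD 0 0)).map fun j => mu.countP fun x => decide (j < x)

/-- A near staircase: a strict partition of the form `ρ + 1^r` with `1 ≤ r ≤ k`
or `ρ ∪ r` with `r ≥ k + 1`, where `ρ` is the staircase of length `k`. -/
def NearStaircase (lam : List ℕ) : Prop :=
  (∃ k r : ℕ, 1 ≤ r ∧ r ≤ k ∧ lam = addOnes r (staircase k)) ∨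
  (∃ k r : ℕ, k + 1 ≤ r ∧ lam = r :: staircase k)

namespace TwoRowAux

/-- width of row `r` -/
def Wd (mu : List ℕ) (r : ℕ) : ℕ := mu.getD r 0

/-- the cells of the straight shape `mu` -/
def IsCell (mu : List ℕ) (r c : ℕ) : Prop := r < mu.length ∧ c < Wd mu r

/-- the reading word of row `r` -/
def RW (mu : List ℕ) (T : ℕ × ℕ → ℕ) (r : ℕ) : List ℕ :=
  ((List.range (Wd mu r)).reverse).map fun c => T (r, c)

/-- the full reading word -/
def wrd (mu : List ℕ) (T : ℕ × ℕ → ℕ) : List ℕ :=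
  (List.range mu.length).flatMap (RW mu T)

/-- the part of the reading word strictly before cell `(r,c)` -/
def preL (mu : List ℕ) (T : ℕ × ℕ → ℕ) (r c : ℕ) : List ℕ :=
  (List.range r).flatMap (RW mu T) ++
    ((List.range' (c+1) (Wd mu r - (c+1))).reverse).map fun c' => T (r, c')

/-- the part of the reading word strictly after cell `(r,c)` -/
def tlL (mu : List ℕ) (T : ℕ × ℕ → ℕ) (r c : ℕ) : List ℕ :=
  (((List.range c).reverse).map fun c' => T (r, c')) ++
    (List.range' (r+1) (mu.length - (r+1))).flatMap (RW mu T)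

/-- number of entries equal to `v` in row `ρ` -/
def rowcnt (mu : List ℕ) (T : ℕ × ℕ → ℕ) (ρ v : ℕ) : ℕ :=
  ∑ c ∈ Finset.range (Wd mu ρ), if T (ρ, c) = v then 1 else 0

/-- all the amenability/content facts, bundled -/
structure Good (k : ℕ) (mu : List ℕ) (T : ℕ × ℕ → ℕ) : Prop where
  hk : 2 ≤ k
  sorted : mu.Pairwise (· ≥ ·)
  posparts : ∀ x ∈ mu, 0 < x
  hsum : mu.sum = 2 * k - 1
  pos : ∀ r c, IsCell mu r c → 1 ≤ T (r, c)
  zero : ∀ r c, ¬ IsCell mu r c → T (r, c) = 0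
  rowmono : ∀ r c, IsCell mu r c → IsCell mu r (c+1) → T (r, c) ≤ T (r, c+1)
  colmono : ∀ r c, IsCell mu r c → IsCell mu (r+1) c → T (r, c) ≤ T (r+1, c)
  rowmark : ∀ r c₁ c₂ i, 1 ≤ i → c₁ ≠ c₂ → IsCell mu r c₁ → IsCell mu r c₂ →
      ¬ (T (r, c₁) = 2*i - 1 ∧ T (r, c₂) = 2*i - 1)
  colunmark : ∀ r₁ r₂ c i, 1 ≤ i → r₁ ≠ r₂ → IsCell mu r₁ c → IsCell mu r₂ c →
      ¬ (T (r₁, c) = 2*i ∧ T (r₂, c) = 2*i)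
  lattice : IsLatticeWord (wrd mu T ++ ((wrd mu T).reverse).map (· + 1))
  cond6 : ∀ i, 1 ≤ i → ∀ p : ℕ, (wrd mu T)[p]? = some (2*i - 1) →
      ∃ q, p < q ∧ (wrd mu T)[q]? = some (2*i)
  content : ∀ i, 1 ≤ i → contentAt (wrd mu T) i = [k, k-1].getD (i-1) 0

lemma indiagram_iff (mu : List ℕ) (r c : ℕ) :
    InDiagram mu.length (fun _ => 0) (fun r => mu.getD r 0) (r, c) ↔ IsCell mu r c := by
  simp [InDiagram, IsCell, Wd]

lemma readingWord_eq (mu : List ℕ) (T : ℕ × ℕ → ℕ) :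
    readingWord mu.length (fun _ => 0) (fun r => mu.getD r 0) T = wrd mu T := by
  unfold readingWord wrd RW Wd
  simp [List.range_eq_range']

lemma good_of_mem {k : ℕ} {mu : List ℕ} {T : ℕ × ℕ → ℕ}
    (hT : T ∈ gSet [k, k-1] mu) (hmu : IsPartitionList mu)
    (hsum : mu.sum = 2 * k - 1) (hk : 2 ≤ k) : Good k mu T := by
  obtain ⟨⟨h1, h2, h3, h4, h5, h6, h7, h8⟩, h9⟩ := hT
  rw [HasContent] at h9
  rw [readingWord_eq] at h7 h8 h9
  rw [augWord, readingWord_eq] at h7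
  refine ⟨hk, hmu.1, hmu.2, hsum, ?_, ?_, ?_, ?_, ?_, ?_, h7, h8, h9⟩
  · intro r c hc; exact h1 (r, c) ((indiagram_iff mu r c).2 hc)
  · intro r c hc; exact h2 (r, c) (fun hd => hc ((indiagram_iff mu r c).1 hd))
  · intro r c hc hc'; exact h3 r c ((indiagram_iff _ _ _).2 hc) ((indiagram_iff _ _ _).2 hc')
  · intro r c hc hc'; exact h4 r c ((indiagram_iff _ _ _).2 hc) ((indiagram_iff _ _ _).2 hc')
  · intro r c₁ c₂ i hi hne hc hc'
    exact h5 r c₁ c₂ i hi hne ((indiagram_iff _ _ _).2 hc) ((indiagram_iff _ _ _).2 hc')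
  · intro r₁ r₂ c i hi hne hc hc'
    exact h6 r₁ r₂ c i hi hne ((indiagram_iff _ _ _).2 hc) ((indiagram_iff _ _ _).2 hc')

end TwoRowAux
namespace TwoRowAux

variable {k : ℕ} {mu : List ℕ} {T : ℕ × ℕ → ℕ}

lemma Wpos (h : Good k mu T) {r : ℕ} (hr : r < mu.length) : 0 < Wd mu r := by
  rw [Wd, List.getD_eq_getElem?_getD, List.getElem?_eq_getElem hr]
  exact h.posparts _ (List.getElem_mem hr)

lemma range_split (a b : ℕ) (h : a ≤ b) :
    List.range b = List.range a ++ List.range' a (b - a) := by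
  rw [List.range_eq_range', List.range_eq_range', show b = a+(b-a) from by omega,
    ← List.range'_append]
  simp

lemma Wanti (h : Good k mu T) {r r' : ℕ} (hrr : r ≤ r') : Wd mu r' ≤ Wd mu r := by
  by_cases hr' : r' < mu.length
  · have hr : r < mu.length := lt_of_le_of_lt hrr hr'
    rcases eq_or_lt_of_le hrr with rfl | hlt
    · exact le_refl _
    · have h2 := (List.pairwise_iff_getElem.1 h.sorted) r r' hr hr' hlt
      simp only [Wd, List.getD_eq_getElem?_getD, List.getElem?_eq_getElem hr,
        List.getElem?_eq_getElem hr', Option.getD_some]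
      exact h2
  · rw [Wd, List.getD_eq_getElem?_getD, List.getElem?_eq_none (by omega)]
    exact Nat.zero_le _

lemma cell_mono (h : Good k mu T) {r c r' c' : ℕ} (hc : IsCell mu r c)
    (hr' : r' ≤ r) (hc' : c' ≤ c) : IsCell mu r' c' :=
  ⟨lt_of_le_of_lt hr' hc.1, lt_of_le_of_lt hc' (le_trans hc.2 (Wanti h hr'))⟩

lemma rowchain (h : Good k mu T) {r c c' : ℕ} (hcell : IsCell mu r c') (hcc : c ≤ c') :
    T (r, c) ≤ T (r, c') := by
  induction c' with
  | zero => obtain rfl : c = 0 := Nat.le_zero.mp hcc; exact le_refl _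
  | succ n ih =>
    rcases Nat.lt_or_ge c (n+1) with hlt | hge
    · have hcn : IsCell mu r n := cell_mono h hcell (le_refl _) (by omega)
      exact le_trans (ih hcn (by omega)) (h.rowmono r n hcn hcell)
    · have : c = n + 1 := by omega
      subst this; exact le_refl _

lemma colchain (h : Good k mu T) {c r r' : ℕ} (hcell : IsCell mu r' c) (hrr : r ≤ r') :
    T (r, c) ≤ T (r', c) := by
  induction r' with
  | zero => obtain rfl : r = 0 := Nat.le_zero.mp hrr; exact le_refl _
  | succ n ih =>
    rcases Nat.lt_or_ge r (n+1) with hlt | hge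
    · have hcn : IsCell mu n c := cell_mono h hcell (by omega) (le_refl _)
      exact le_trans (ih hcn (by omega)) (h.colmono n c hcn hcell)
    · have : r = n + 1 := by omega
      subst this; exact le_refl _

lemma split_cell {r c : ℕ} (hcell : IsCell mu r c) :
    wrd mu T = preL mu T r c ++ T (r, c) :: tlL mu T r c := by
  obtain ⟨hr, hc⟩ := hcell
  have h1 : List.range mu.length = List.range r ++ List.range' r (mu.length - r) := by
    exact range_split r mu.length (by omega)
  have h2 : List.range' r (mu.length - r) = r :: List.range' (r+1) (mu.length - (r+1)) := by
    have : mu.length - r = (mu.length - (r+1)) + 1 := by omega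
    rw [this, List.range'_succ]
  have h3 : List.range (Wd mu r) =
      (List.range c ++ [c]) ++ List.range' (c+1) (Wd mu r - (c+1)) := by
    rw [← List.range_succ]
    exact range_split (c+1) (Wd mu r) (by omega)
  have h4 : RW mu T r = (((List.range' (c+1) (Wd mu r - (c+1))).reverse).map
        fun c' => T (r, c')) ++ T (r, c) :: ((List.range c).reverse).map fun c' => T (r, c') := by
    rw [RW, h3]
    simp [List.reverse_append]
  rw [wrd, h1, h2, List.flatMap_append, List.flatMap_cons, h4, preL, tlL]
  simp

lemma mem_tlL {r c y : ℕ} (hr : r < mu.length) (hy : y ∈ tlL mu T r c) :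
    (∃ c', c' < c ∧ y = T (r, c')) ∨
    (∃ ρ c', r + 1 ≤ ρ ∧ ρ < mu.length ∧ c' < Wd mu ρ ∧ y = T (ρ, c')) := by
  rw [tlL, List.mem_append] at hy
  rcases hy with hy | hy
  · left
    simp only [List.mem_map, List.mem_reverse, List.mem_range] at hy
    obtain ⟨c', hc', rfl⟩ := hy
    exact ⟨c', hc', rfl⟩
  · right
    simp only [List.mem_flatMap, List.mem_range'_1] at hy
    obtain ⟨ρ, ⟨hρ1, hρ2⟩, hyρ⟩ := hy
    rw [RW] at hyρ
    simp only [List.mem_map, List.mem_reverse, List.mem_range] at hyρ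
    obtain ⟨c', hc', rfl⟩ := hyρ
    exact ⟨ρ, c', hρ1, by omega, hc', rfl⟩

lemma mem_wrd {r c : ℕ} (hcell : IsCell mu r c) : T (r, c) ∈ wrd mu T := by
  rw [split_cell hcell]
  simp

end TwoRowAux
namespace TwoRowAux

variable {k : ℕ} {mu : List ℕ} {T : ℕ × ℕ → ℕ}

lemma list_sum_range (f : ℕ → ℕ) (n : ℕ) :
    ((List.range n).map f).sum = ∑ i ∈ Finset.range n, f i := by
  induction n with
  | zero => simp
  | succ n ih => rw [List.range_succ, Finset.sum_range_succ]; simp [ih]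

lemma countP_range_sum (p : ℕ → Bool) (n : ℕ) :
    (List.range n).countP p = ∑ c ∈ Finset.range n, if p c then 1 else 0 := by
  induction n with
  | zero => simp
  | succ n ih =>
    rw [List.range_succ, Finset.sum_range_succ, List.countP_append, ih]
    simp [List.countP_cons]

lemma count_RW (ρ v : ℕ) : (RW mu T ρ).count v = rowcnt mu T ρ v := by
  rw [RW, rowcnt, List.count_eq_countP, List.countP_map, List.countP_reverse]
  rw [countP_range_sum]
  apply Finset.sum_congr rfl
  intro c _
  simp [Function.comp]

lemma count_wrd (v : ℕ) :
    (wrd mu T).count v = ∑ ρ ∈ Finset.range mu.length, rowcnt mu T ρ v := by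
  rw [wrd, List.count_flatMap, list_sum_range]
  exact Finset.sum_congr rfl fun ρ _ => count_RW ρ v

lemma count_tlL (r c v : ℕ) :
    (tlL mu T r c).count v = (∑ c' ∈ Finset.range c, if T (r, c') = v then 1 else 0) +
      ∑ ρ ∈ Finset.Ico (r+1) mu.length, rowcnt mu T ρ v := by
  rw [tlL, List.count_append]
  congr 1
  · rw [List.count_eq_countP, List.countP_map, List.countP_reverse, countP_range_sum]
    apply Finset.sum_congr rfl
    intro c' _
    simp [Function.comp]
  · rw [List.count_flatMap, List.range'_eq_map_range, List.map_map, list_sum_range]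
    rw [Finset.sum_Ico_eq_sum_range]
    apply Finset.sum_congr rfl
    intro i _
    exact count_RW _ v

lemma rowcnt_zero {ρ v : ℕ} (hv : ∀ c, c < Wd mu ρ → T (ρ, c) ≠ v) :
    rowcnt mu T ρ v = 0 := by
  apply Finset.sum_eq_zero
  intro c hc
  simp only [Finset.mem_range] at hc
  simp [hv c hc]

lemma rowcnt_single {ρ v : ℕ} (c₀ : ℕ) (h₀ : c₀ < Wd mu ρ) (hv : T (ρ, c₀) = v)
    (hu : ∀ c, c < Wd mu ρ → c ≠ c₀ → T (ρ, c) ≠ v) : rowcnt mu T ρ v = 1 := by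
  rw [rowcnt, Finset.sum_eq_single_of_mem c₀ (Finset.mem_range.2 h₀)]
  · simp [hv]
  · intro b hb hne
    simp only [Finset.mem_range] at hb
    simp [hu b hb hne]

/-- content facts -/
lemma cnt_one (h : Good k mu T) : (wrd mu T).count 2 + (wrd mu T).count 1 = k := by
  have := h.content 1 (le_refl 1)
  rw [contentAt] at this
  simpa using this

lemma cnt_two (h : Good k mu T) : (wrd mu T).count 4 + (wrd mu T).count 3 = k - 1 := by
  have := h.content 2 (by omega)
  rw [contentAt] at this
  simpa using this

lemma val_le_four (h : Good k mu T) {r c : ℕ} (hcell : IsCell mu r c) : T (r, c) ≤ 4 := by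
  by_contra hgt
  push_neg at hgt
  set v := T (r, c) with hv
  have hmem : v ∈ wrd mu T := mem_wrd hcell
  have hcnt : (wrd mu T).count v = 0 := by
    rcases Nat.even_or_odd v with ⟨i, hi⟩ | ⟨i, hi⟩
    · have h3 : 3 ≤ i := by omega
      have := h.content i (by omega)
      rw [contentAt] at this
      have hz : [k, k-1].getD (i-1) 0 = 0 := by
        have : 2 ≤ i - 1 := by omega
        rcases Nat.lt_or_ge (i-1) 2 with hlt | hge
        · omega
        · exact List.getD_eq_default _ _ (by simpa using hge)
      rw [hz] at this
      have : (wrd mu T).count (2*i) = 0 := by omega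
      rwa [show v = 2*i by omega]
    · have h3 : 3 ≤ i + 1 := by omega
      have := h.content (i+1) (by omega)
      rw [contentAt] at this
      have hz : [k, k-1].getD (i+1-1) 0 = 0 := by
        exact List.getD_eq_default _ _ (by simp; omega)
      rw [hz] at this
      have : (wrd mu T).count (2*(i+1) - 1) = 0 := by omega
      rwa [show v = 2*(i+1) - 1 by omega]
  rw [List.count_eq_zero] at hcnt
  exact hcnt hmem

end TwoRowAux
namespace TwoRowAux

variable {k : ℕ} {mu : List ℕ} {T : ℕ × ℕ → ℕ}

lemma use_lattice_first (h : Good k mu T) (hm : 0 < mu.length) :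
    T (0, Wd mu 0 - 1) ≠ 4 ∧ T (0, Wd mu 0 - 1) ≠ 3 := by
  have hW : 0 < Wd mu 0 := Wpos h hm
  have hcell : IsCell mu 0 (Wd mu 0 - 1) := ⟨hm, by omega⟩
  have hsplit := split_cell (T := T) hcell
  have hpre : preL mu T 0 (Wd mu 0 - 1) = [] := by
    rw [preL]
    simp [show Wd mu 0 - (Wd mu 0 - 1 + 1) = 0 by omega]
  rw [hpre, List.nil_append] at hsplit
  have hpref : [] ++ [T (0, Wd mu 0 - 1)] <+:
      wrd mu T ++ ((wrd mu T).reverse).map (· + 1) := by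
    rw [hsplit]
    simp only [List.nil_append, List.cons_append]
    exact ⟨_, rfl⟩
  have := h.lattice [] _ hpref 1 (le_refl 1) (by simp)
  simpa using this

lemma aug_split {r c : ℕ} (hcell : IsCell mu r c) :
    wrd mu T ++ ((wrd mu T).reverse).map (· + 1) =
      (wrd mu T ++ ((tlL mu T r c).map (· + 1)).reverse) ++ (T (r, c) + 1) ::
        ((preL mu T r c).map (· + 1)).reverse := by
  conv_lhs => rw [show ((wrd mu T).reverse).map (· + 1) =
    (((preL mu T r c ++ T (r, c) :: tlL mu T r c)).reverse).map (· + 1) by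
      rw [← split_cell hcell]]
  simp [List.reverse_append]

lemma use_lattice_B (h : Good k mu T) {r c : ℕ} (hcell : IsCell mu r c)
    (hcnt : (wrd mu T).count 2 + (tlL mu T r c).count 1 =
            (wrd mu T).count 4 + (tlL mu T r c).count 3) :
    T (r, c) ≠ 2 ∧ T (r, c) ≠ 3 := by
  set p := wrd mu T ++ ((tlL mu T r c).map (· + 1)).reverse with hp
  have hpref : p ++ [T (r, c) + 1] <+: wrd mu T ++ ((wrd mu T).reverse).map (· + 1) := by
    rw [aug_split hcell]
    exact ⟨((preL mu T r c).map (· + 1)).reverse, by simp [hp]⟩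
  have hinj : Function.Injective (· + 1 : ℕ → ℕ) := fun a b hab => by simpa using hab
  have hc2 : p.count 2 = (wrd mu T).count 2 + (tlL mu T r c).count 1 := by
    rw [hp, List.count_append]
    congr 1
    rw [List.count_reverse, show (2 : ℕ) = 1 + 1 from rfl,
      List.count_map_of_injective _ _ hinj]
  have hc4 : p.count 4 = (wrd mu T).count 4 + (tlL mu T r c).count 3 := by
    rw [hp, List.count_append]
    congr 1
    rw [List.count_reverse, show (4 : ℕ) = 3 + 1 from rfl,
      List.count_map_of_injective _ _ hinj]
  have := h.lattice p _ hpref 1 (le_refl 1) (by rw [hc2, hc4]; exact hcnt)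
  constructor
  · intro hx; exact this.2 (by omega)
  · intro hx; exact this.1 (by omega)

lemma use_cond6 (h : Good k mu T) {r c i : ℕ} (hcell : IsCell mu r c) (hi : 1 ≤ i)
    (hx : T (r, c) = 2*i - 1) (htl : ∀ y ∈ tlL mu T r c, y ≠ 2*i) : False := by
  have hsplit := split_cell (T := T) hcell
  have hget : (wrd mu T)[(preL mu T r c).length]? = some (2*i - 1) := by
    rw [hsplit, List.getElem?_append_right (le_refl _)]
    simp [hx]
  obtain ⟨q, hq, hget2⟩ := h.cond6 i hi _ hget
  rw [hsplit, List.getElem?_append_right (by omega)] at hget2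
  have : q - (preL mu T r c).length = (q - (preL mu T r c).length - 1) + 1 := by omega
  rw [this] at hget2
  simp only [List.getElem?_cons_succ] at hget2
  exact htl _ (List.mem_of_getElem? hget2) rfl

end TwoRowAux
namespace TwoRowAux

variable {k : ℕ} {mu : List ℕ} {T : ℕ × ℕ → ℕ}

lemma m_pos (h : Good k mu T) : 0 < mu.length := by
  rcases hmu : mu with _ | ⟨a, t⟩
  · have h2 := h.hsum
    have h3 := h.hk
    rw [hmu] at h2
    simp at h2
    omega
  · simp

lemma val_pos (h : Good k mu T) {r c : ℕ} (hcell : IsCell mu r c) : 1 ≤ T (r, c) :=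
  h.pos r c hcell

/-- Rule F2 : the top row has only 1-valued letters -/
lemma row0_le2 (h : Good k mu T) {c : ℕ} (hcell : IsCell mu 0 c) : T (0, c) ≤ 2 := by
  have hm : 0 < mu.length := m_pos h
  have hlast : IsCell mu 0 (Wd mu 0 - 1) := ⟨hm, by have := Wpos h hm; omega⟩
  have h1 := rowchain h hlast (show c ≤ Wd mu 0 - 1 by have := hcell.2; omega)
  have h2 := use_lattice_first h hm
  have h3 := val_le_four h hlast
  omega

/-- Rule F3 : cells off the first column and first row are 2-valued -/
lemma ge3 (h : Good k mu T) {r c : ℕ} (hcell : IsCell mu r c) (hr : 1 ≤ r) (hc : 1 ≤ c) :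
    3 ≤ T (r, c) := by
  by_contra hle
  push_neg at hle
  have hcell1 : IsCell mu 1 c := cell_mono h hcell hr (le_refl _)
  have hcell0 : IsCell mu 0 c := cell_mono h hcell (by omega) (le_refl _)
  have hcell0' : IsCell mu 0 (c-1) := cell_mono h hcell (by omega) (by omega)
  have h1c : T (1, c) ≤ T (r, c) := colchain h hcell hr
  have h0c : T (0, c) ≤ T (1, c) := h.colmono 0 c hcell0 hcell1
  have hp0 : 1 ≤ T (0, c) := val_pos h hcell0
  rcases (show T (0, c) = 1 ∨ T (0, c) = 2 by omega) with h1 | h2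
  · have hle1 : T (0, c-1) ≤ T (0, c) := rowchain h hcell0 (by omega)
    have hp1 : 1 ≤ T (0, c-1) := val_pos h hcell0'
    exact h.rowmark 0 (c-1) c 1 (le_refl _) (by omega) hcell0' hcell0 (by omega)
  · have : T (1, c) = 2 := by omega
    exact h.colunmark 0 1 c 1 (le_refl _) (by omega) hcell0 hcell1 (by omega)

/-- the number of first-column cells below the top row with 1-valued entries -/
def Ld (mu : List ℕ) (T : ℕ × ℕ → ℕ) : ℕ :=
  ((Finset.range mu.length).filter (fun ρ => 1 ≤ ρ ∧ T (ρ, 0) ≤ 2)).card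

lemma mem_S_mono (h : Good k mu T) {ρ ρ' : ℕ}
    (hρ : ρ ∈ (Finset.range mu.length).filter (fun σ => 1 ≤ σ ∧ T (σ, 0) ≤ 2))
    (h1 : 1 ≤ ρ') (h2 : ρ' ≤ ρ) :
    ρ' ∈ (Finset.range mu.length).filter (fun σ => 1 ≤ σ ∧ T (σ, 0) ≤ 2) := by
  simp only [Finset.mem_filter, Finset.mem_range] at hρ ⊢
  obtain ⟨hρm, _, hρT⟩ := hρ
  have hcell : IsCell mu ρ 0 := ⟨hρm, Wpos h hρm⟩
  exact ⟨by omega, h1, le_trans (colchain h hcell h2) hρT⟩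

lemma L_lt (h : Good k mu T) : Ld mu T < mu.length := by
  have hsub : (Finset.range mu.length).filter (fun ρ => 1 ≤ ρ ∧ T (ρ, 0) ≤ 2) ⊆
      Finset.Ico 1 mu.length := by
    intro ρ hρ
    simp only [Finset.mem_filter, Finset.mem_range] at hρ
    simp only [Finset.mem_Ico]
    omega
  have := Finset.card_le_card hsub
  rw [Nat.card_Ico] at this
  have := m_pos h
  rw [Ld]
  omega

lemma L_iff (h : Good k mu T) {ρ : ℕ} (h1 : 1 ≤ ρ) (h2 : ρ < mu.length) :
    T (ρ, 0) ≤ 2 ↔ ρ ≤ Ld mu T := by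
  set S := (Finset.range mu.length).filter (fun σ => 1 ≤ σ ∧ T (σ, 0) ≤ 2) with hS
  constructor
  · intro hT
    have hρS : ρ ∈ S := by
      simp only [hS, Finset.mem_filter, Finset.mem_range]; exact ⟨h2, h1, hT⟩
    have hsub : Finset.Icc 1 ρ ⊆ S := by
      intro σ hσ
      simp only [Finset.mem_Icc] at hσ
      exact mem_S_mono h hρS hσ.1 hσ.2
    have := Finset.card_le_card hsub
    rw [Nat.card_Icc] at this
    rw [Ld, ← hS]
    omega
  · intro hρL
    by_contra hgt
    have hsub : S ⊆ Finset.Ico 1 ρ := by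
      intro σ hσ
      have hσ' := hσ
      simp only [hS, Finset.mem_filter, Finset.mem_range] at hσ'
      simp only [Finset.mem_Ico]
      refine ⟨hσ'.2.1, ?_⟩
      by_contra hge
      push_neg at hge
      have := mem_S_mono h hσ h1 hge
      simp only [hS, Finset.mem_filter, Finset.mem_range] at this
      exact hgt this.2.2
    have := Finset.card_le_card hsub
    rw [Nat.card_Ico] at this
    rw [Ld, ← hS] at hρL
    omega

lemma L_add (h : Good k mu T) : Wd mu 0 + Ld mu T = k := by
  have hm : 0 < mu.length := m_pos h
  have hmem0 : (0 : ℕ) ∈ Finset.range mu.length := Finset.mem_range.2 hm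
  have key : (wrd mu T).count 2 + (wrd mu T).count 1 =
      ∑ ρ ∈ Finset.range mu.length, (rowcnt mu T ρ 2 + rowcnt mu T ρ 1) := by
    rw [count_wrd, count_wrd, Finset.sum_add_distrib]
  have rowsum : ∀ ρ, ρ < mu.length → rowcnt mu T ρ 2 + rowcnt mu T ρ 1 =
      ∑ c ∈ Finset.range (Wd mu ρ), if T (ρ, c) ≤ 2 then 1 else 0 := by
    intro ρ hρ
    rw [rowcnt, rowcnt, ← Finset.sum_add_distrib]
    apply Finset.sum_congr rfl
    intro c hc
    simp only [Finset.mem_range] at hc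
    have hcell : IsCell mu ρ c := ⟨hρ, hc⟩
    have := val_pos h hcell
    have := val_le_four h hcell
    split_ifs <;> omega
  have row0 : rowcnt mu T 0 2 + rowcnt mu T 0 1 = Wd mu 0 := by
    rw [rowsum 0 hm]
    rw [Finset.sum_congr rfl (fun c hc => by
      simp only [Finset.mem_range] at hc
      rw [if_pos (row0_le2 h ⟨hm, hc⟩)])]
    simp
  have rowρ : ∀ ρ ∈ (Finset.range mu.length).erase 0,
      rowcnt mu T ρ 2 + rowcnt mu T ρ 1 = if T (ρ, 0) ≤ 2 then 1 else 0 := by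
    intro ρ hρ
    simp only [Finset.mem_erase, Finset.mem_range] at hρ
    rw [rowsum ρ hρ.2]
    rw [Finset.sum_eq_single_of_mem 0 (Finset.mem_range.2 (Wpos h hρ.2))]
    intro c hc hcne
    simp only [Finset.mem_range] at hc
    rw [if_neg]
    have := ge3 h ⟨hρ.2, hc⟩ (by omega) (by omega)
    omega
  have hk : k = (wrd mu T).count 2 + (wrd mu T).count 1 := (cnt_one h).symm
  rw [key, ← Finset.add_sum_erase _ _ hmem0, row0] at hk
  have hsum2 : ∑ ρ ∈ (Finset.range mu.length).erase 0,
      (rowcnt mu T ρ 2 + rowcnt mu T ρ 1) =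
      ∑ ρ ∈ (Finset.range mu.length).erase 0, (if T (ρ, 0) ≤ 2 then 1 else 0) :=
    Finset.sum_congr rfl rowρ
  have hcard : Ld mu T = ∑ ρ ∈ (Finset.range mu.length).erase 0,
      (if T (ρ, 0) ≤ 2 then 1 else 0) := by
    rw [Ld, Finset.card_filter, ← Finset.add_sum_erase _ _ hmem0]
    rw [if_neg (by omega)]
    rw [Nat.zero_add]
    apply Finset.sum_congr rfl
    intro ρ hρ
    simp only [Finset.mem_erase, Finset.mem_range] at hρ
    have : (1 ≤ ρ ∧ T (ρ, 0) ≤ 2) ↔ T (ρ, 0) ≤ 2 := by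
      constructor
      · exact fun h' => h'.2
      · exact fun h' => ⟨by omega, h'⟩
    simp only [this]
  rw [hsum2, ← hcard] at hk
  omega

end TwoRowAux
namespace TwoRowAux

variable {k : ℕ} {mu : List ℕ} {T : ℕ × ℕ → ℕ}

/-- all entries strictly below row `Ld` are 2-valued -/
lemma below_ge3 (h : Good k mu T) {ρ c' : ℕ} (hcell : IsCell mu ρ c')
    (hρ : Ld mu T < ρ ∨ 1 ≤ c') (hρ1 : 1 ≤ ρ) : 3 ≤ T (ρ, c') := by
  rcases hρ with hρ | hc'
  · rcases Nat.lt_or_ge c' 1 with hc0 | hc1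
    · have : c' = 0 := by omega
      subst this
      by_contra hlt
      push_neg at hlt
      have := (L_iff h hρ1 hcell.1).1 (by omega)
      omega
    · exact ge3 h hcell hρ1 hc1
  · exact ge3 h hcell hρ1 hc'

/-- Rule F5a -/
lemma F5a (h : Good k mu T) (hL : 1 ≤ Ld mu T) : T (Ld mu T, 0) = 2 := by
  set L := Ld mu T with hLdef
  have hLm : L < mu.length := L_lt h
  have hcell : IsCell mu L 0 := ⟨hLm, Wpos h hLm⟩
  have hle : T (L, 0) ≤ 2 := (L_iff h hL hLm).2 (le_refl _)
  have hpos : 1 ≤ T (L, 0) := val_pos h hcell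
  rcases (show T (L, 0) = 1 ∨ T (L, 0) = 2 by omega) with h1 | h2
  · exfalso
    apply use_cond6 h hcell (le_refl 1) (by simpa using h1)
    intro y hy
    rcases mem_tlL hLm hy with ⟨c', hc', rfl⟩ | ⟨ρ, c', hρ1, hρ2, hc', rfl⟩
    · omega
    · have := below_ge3 h ⟨hρ2, hc'⟩ (by left; omega) (by omega)
      omega
  · exact h2

/-- Rule F5b -/
lemma F5b (h : Good k mu T) {r : ℕ} (hrL : r < Ld mu T) : T (r, 0) = 1 := by
  set L := Ld mu T with hLdef
  have hLm : L < mu.length := L_lt h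
  have hrm : r < mu.length := by omega
  have hcell : IsCell mu r 0 := ⟨hrm, Wpos h hrm⟩
  have hcellL : IsCell mu L 0 := ⟨hLm, Wpos h hLm⟩
  have hle : T (r, 0) ≤ 2 := by
    rcases Nat.lt_or_ge r 1 with h0 | h1
    · have : r = 0 := by omega
      subst this
      exact row0_le2 h hcell
    · exact (L_iff h h1 hrm).2 (by omega)
  have hpos : 1 ≤ T (r, 0) := val_pos h hcell
  rcases (show T (r, 0) = 1 ∨ T (r, 0) = 2 by omega) with h1 | h2
  · exact h1
  · exfalso
    have hL2 : T (L, 0) = 2 := F5a h (by omega)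
    exact h.colunmark r L 0 1 (le_refl _) (by omega) hcell hcellL (by omega)

/-- Rule F5c -/
lemma F5c (h : Good k mu T) {c : ℕ} (hcell : IsCell mu 0 c)
    (hc : 1 ≤ c ∨ Ld mu T = 0) : T (0, c) = 2 := by
  have hle : T (0, c) ≤ 2 := row0_le2 h hcell
  have hpos : 1 ≤ T (0, c) := val_pos h hcell
  rcases (show T (0, c) = 1 ∨ T (0, c) = 2 by omega) with h1 | h2
  · exfalso
    rcases hc with hc1 | hL0
    · have hcell0 : IsCell mu 0 0 := cell_mono h hcell (le_refl _) (by omega)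
      have hle0 : T (0, 0) ≤ T (0, c) := rowchain h hcell (by omega)
      have hpos0 : 1 ≤ T (0, 0) := val_pos h hcell0
      exact h.rowmark 0 0 c 1 (le_refl _) (by omega) hcell0 hcell (by omega)
    · rcases Nat.lt_or_ge 0 c with hc1 | hc0
      · have hcell0 : IsCell mu 0 0 := cell_mono h hcell (le_refl _) (by omega)
        have hle0 : T (0, 0) ≤ T (0, c) := rowchain h hcell (by omega)
        have hpos0 : 1 ≤ T (0, 0) := val_pos h hcell0
        exact h.rowmark 0 0 c 1 (le_refl _) (by omega) hcell0 hcell (by omega)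
      · have : c = 0 := by omega
        subst this
        apply use_cond6 h hcell (le_refl 1) (by simpa using h1)
        intro y hy
        rcases mem_tlL hcell.1 hy with ⟨c', hc', rfl⟩ | ⟨ρ, c', hρ1, hρ2, hc', rfl⟩
        · omega
        · have := below_ge3 h ⟨hρ2, hc'⟩ (by left; omega) (by omega)
          omega
  · exact h2

/-- Rule F6 : a 2-valued cell with a 2-valued left neighbour is unmarked -/
lemma F6 (h : Good k mu T) {r c : ℕ} (hcell : IsCell mu r c) (hc : 1 ≤ c)
    (h3 : 3 ≤ T (r, c-1)) : T (r, c) = 4 := by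
  have hcell' : IsCell mu r (c-1) := cell_mono h hcell (le_refl _) (by omega)
  have hmono : T (r, c-1) ≤ T (r, c) := by
    have := h.rowmono r (c-1) hcell' (by rwa [show c - 1 + 1 = c by omega])
    rwa [show c - 1 + 1 = c by omega] at this
  have hle : T (r, c) ≤ 4 := val_le_four h hcell
  rcases (show T (r, c) = 3 ∨ T (r, c) = 4 by omega) with h1 | h2
  · exfalso
    exact h.rowmark r (c-1) c 2 (by omega) (by omega) hcell' hcell (by omega)
  · exact h2

/-- Rule F7 : a 2-valued cell with a cell below it (in the diagram) is marked -/
lemma F7 (h : Good k mu T) {r c : ℕ} (hcell' : IsCell mu (r+1) c)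
    (h3 : 3 ≤ T (r, c)) : T (r, c) = 3 := by
  have hcell : IsCell mu r c := cell_mono h hcell' (by omega) (le_refl _)
  have hmono : T (r, c) ≤ T (r+1, c) := h.colmono r c hcell hcell'
  have hle : T (r, c) ≤ 4 := val_le_four h hcell
  have hle' : T (r+1, c) ≤ 4 := val_le_four h hcell'
  rcases (show T (r, c) = 3 ∨ T (r, c) = 4 by omega) with h1 | h2
  · exact h1
  · exfalso
    exact h.colunmark r (r+1) c 2 (by omega) (by omega) hcell hcell' (by omega)

/-- Rule F8 : a 2-valued cell with nothing 2-valued after it is unmarked -/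
lemma F8 (h : Good k mu T) {r c : ℕ} (hcell : IsCell mu r c) (h3 : 3 ≤ T (r, c))
    (htl : ∀ y ∈ tlL mu T r c, y ≤ 2) : T (r, c) = 4 := by
  have hle : T (r, c) ≤ 4 := val_le_four h hcell
  rcases (show T (r, c) = 3 ∨ T (r, c) = 4 by omega) with h1 | h2
  · exfalso
    apply use_cond6 h hcell (show 1 ≤ 2 by omega) (by simpa using h1)
    intro y hy
    have := htl y hy
    omega
  · exact h2

end TwoRowAux
namespace TwoRowAux

variable {k : ℕ} {mu : List ℕ} {T : ℕ × ℕ → ℕ}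

lemma sum_widths (mu : List ℕ) : mu.sum = ∑ ρ ∈ Finset.range mu.length, Wd mu ρ := by
  induction mu with
  | nil => simp
  | cons a t ih =>
    rw [List.sum_cons, List.length_cons, Finset.sum_range_succ']
    have h0 : Wd (a :: t) 0 = a := rfl
    have hs : ∀ ρ, Wd (a :: t) (ρ + 1) = Wd t ρ := fun ρ => rfl
    simp only [h0, hs]
    omega

/-- the marked 1's are exactly the first-column cells in rows `0, …, L-1` -/
lemma count1_eq_L (h : Good k mu T) : (wrd mu T).count 1 = Ld mu T := by
  set L := Ld mu T with hLdef
  have hLm : L < mu.length := L_lt h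
  rw [count_wrd]
  have hval : ∀ ρ ∈ Finset.range mu.length,
      rowcnt mu T ρ 1 = if ρ < L then 1 else 0 := by
    intro ρ hρ
    simp only [Finset.mem_range] at hρ
    split_ifs with hρL
    · apply rowcnt_single 0 (Wpos h hρ)
      · exact F5b h hρL
      · intro c hc hcne
        rcases Nat.lt_or_ge ρ 1 with h0 | h1
        · have : ρ = 0 := by omega
          subst this
          rw [F5c h ⟨hρ, hc⟩ (Or.inl (by omega))]
          omega
        · have := ge3 h ⟨hρ, hc⟩ h1 (by omega)
          omega
    · apply rowcnt_zero
      intro c hc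
      push_neg at hρL
      rcases Nat.lt_or_ge ρ 1 with h0 | h1
      · have : ρ = 0 := by omega
        subst this
        have hL0 : L = 0 := by omega
        rw [F5c h ⟨hρ, hc⟩ (Or.inr hL0)]
        omega
      · rcases Nat.lt_or_ge L ρ with hgt | hle
        · have := below_ge3 h ⟨hρ, hc⟩ (Or.inl hgt) h1
          omega
        · have hρeq : ρ = L := by omega
          subst hρeq
          rcases Nat.lt_or_ge c 1 with hc0 | hc1
          · have : c = 0 := by omega
            subst this
            rw [F5a h h1]
            omega
          · have := ge3 h ⟨hρ, hc⟩ h1 hc1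
            omega
  rw [Finset.sum_congr rfl hval]
  rw [Finset.range_eq_Ico, ← Finset.sum_Ico_consecutive _ (Nat.zero_le L) (le_of_lt hLm)]
  have e1 : ∑ ρ ∈ Finset.Ico 0 L, (if ρ < L then 1 else 0) = L := by
    rw [Finset.sum_congr rfl (fun ρ hρ => by
      simp only [Finset.mem_Ico] at hρ
      rw [if_pos hρ.2])]
    simp
  have e2 : ∑ ρ ∈ Finset.Ico L mu.length, (if ρ < L then 1 else 0) = 0 := by
    apply Finset.sum_eq_zero
    intro ρ hρ
    simp only [Finset.mem_Ico] at hρ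
    rw [if_neg (by omega)]
  omega

/-- a width-one row's count -/
lemma rowcnt_width_one {ρ v : ℕ} (hW : Wd mu ρ = 1) :
    rowcnt mu T ρ v = if T (ρ, 0) = v then 1 else 0 := by
  rw [rowcnt, hW, Finset.sum_range_one]

end TwoRowAux
namespace TwoRowAux

variable {k : ℕ} {mu : List ℕ} {T : ℕ × ℕ → ℕ}

/-- Rule F9 : the special cell is marked -/
lemma F9 (h : Good k mu T) {r : ℕ} (hcell : IsCell mu r 1) (hr : 1 ≤ r)
    (hrL : r ≤ Ld mu T) (hW : Wd mu (r+1) ≤ 1) (hm : Ld mu T + 1 < mu.length) :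
    T (r, 1) = 3 := by
  set L := Ld mu T with hLdef
  set m := mu.length with hmdef
  have hrm : r < m := hcell.1
  have hLm : L < m := L_lt h
  have h31 : 3 ≤ T (r, 1) := ge3 h hcell hr (le_refl _)
  by_contra hne
  have hx : T (r, 1) = 4 := by
    have := val_le_four h hcell
    omega
  -- case (i) : some row 2 ≤ ρ ≤ r has width at least 3
  by_cases hcase : ∃ ρ, 2 ≤ ρ ∧ ρ ≤ r ∧ 3 ≤ Wd mu ρ
  · obtain ⟨ρ, hρ2, hρr, hρW⟩ := hcase
    have hcρ : IsCell mu ρ 2 := ⟨by omega, by omega⟩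
    have hcρ' : IsCell mu (ρ-1) 2 := cell_mono h hcρ (by omega) (le_refl _)
    have h4 : T (ρ-1, 2) = 4 := by
      apply F6 h hcρ' (by omega)
      exact ge3 h (cell_mono h hcρ' (le_refl _) (by omega)) (by omega) (by omega)
    have h3 : T (ρ-1, 2) = 3 := by
      have := F7 h (show IsCell mu ((ρ-1)+1) 2 by
        rw [show ρ - 1 + 1 = ρ by omega]; exact hcρ) (by omega)
      exact this
    omega
  -- case (ii) : rows 2 … r all have width exactly 2
  push_neg at hcase
  have hWr : 2 ≤ Wd mu r := hcell.2
  have hflat : ∀ ρ, 2 ≤ ρ → ρ ≤ r → Wd mu ρ = 2 := by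
    intro ρ h2 h3
    have h4 := hcase ρ h2 h3
    have h5 := le_trans (Wanti h h3) (le_refl _)
    have := Wanti h h3
    omega
  have hw1 : ∀ ρ, r + 1 ≤ ρ → ρ < m → Wd mu ρ = 1 := by
    intro ρ h1 h2
    have := Wanti h (show r + 1 ≤ ρ from h1)
    have := Wpos h h2
    omega
  -- forced values
  have hL1 : 1 ≤ L := le_trans hr hrL
  have hrow : ∀ ρ, 1 ≤ ρ → ρ < r → T (ρ, 1) = 3 := by
    intro ρ h1 h2
    apply F7 h (show IsCell mu (ρ+1) 1 from ⟨by omega, by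
      rcases Nat.lt_or_ge (ρ+1) r with hlt2 | hge2
      · rw [hflat (ρ+1) (by omega) (by omega)]; omega
      · have he : ρ + 1 = r := by omega
        rw [he]; omega⟩)
    exact ge3 h ⟨by omega, by
      have := Wanti h (show ρ ≤ r by omega); omega⟩ h1 (le_refl _)
  have hcol : ∀ ρ, L + 1 ≤ ρ → ρ + 1 < m → T (ρ, 0) = 3 := by
    intro ρ h1 h2
    apply F7 h (show IsCell mu (ρ+1) 0 from ⟨by omega, Wpos h (by omega)⟩)
    exact below_ge3 h ⟨by omega, Wpos h (by omega)⟩ (Or.inl (by omega)) (by omega)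
  have hlast : T (m-1, 0) = 4 := by
    apply F8 h ⟨by omega, Wpos h (by omega)⟩
    · exact below_ge3 h ⟨by omega, Wpos h (by omega)⟩ (Or.inl (by omega)) (by omega)
    · intro y hy
      rcases mem_tlL (by omega) hy with ⟨c', hc', _⟩ | ⟨ρ, c', hρ1, hρ2, _, _⟩
      · omega
      · omega
  -- count of 3's
  have hcnt3 : (wrd mu T).count 3 = (r - 1) + (m - 2 - L) := by
    rw [count_wrd]
    have hval : ∀ ρ ∈ Finset.range m, rowcnt mu T ρ 3 =
        if (1 ≤ ρ ∧ ρ < r) ∨ (L + 1 ≤ ρ ∧ ρ < m - 1) then 1 else 0 := by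
      intro ρ hρ
      simp only [Finset.mem_range] at hρ
      split_ifs with hρP
      · rcases hρP with ⟨h1, h2⟩ | ⟨h1, h2⟩
        · apply rowcnt_single 1 (by have := Wanti h (show ρ ≤ r by omega); omega)
          · exact hrow ρ h1 h2
          · intro c hc hcne
            rcases Nat.lt_or_ge c 1 with hc0 | hc1
            · have : c = 0 := by omega
              subst this
              rw [F5b h (show ρ < L by omega)]
              omega
            · have := F6 h ⟨hρ, hc⟩ (by omega) (by
                have := ge3 h ⟨hρ, by omega⟩ h1 (show 1 ≤ c - 1 by omega)
                omega)
              omega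
        · apply rowcnt_single 0 (Wpos h hρ)
          · exact hcol ρ h1 (by omega)
          · intro c hc hcne
            rw [hw1 ρ (by omega) hρ] at hc
            omega
      · push_neg at hρP
        apply rowcnt_zero
        intro c hc
        rcases Nat.lt_or_ge ρ 1 with h0 | h1
        · -- row 0
          have : ρ = 0 := by omega
          subst this
          rcases Nat.lt_or_ge c 1 with hc0 | hc1
          · have : c = 0 := by omega
            subst this
            rw [F5b h (show 0 < L by omega)]; omega
          · rw [F5c h ⟨hρ, hc⟩ (Or.inl hc1)]; omega
        · rcases Nat.lt_or_ge ρ r with hρr' | hρr''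
          · exact absurd (hρP.1 h1) (by omega)
          · rcases Nat.lt_or_ge ρ (r+1) with hρr1 | hρr2
            · -- ρ = r
              have hρr : ρ = r := by omega
              rcases Nat.lt_or_ge c 1 with hc0 | hc1
              · have hcc0 : c = 0 := by omega
                rw [hρr, hcc0]
                rcases Nat.lt_or_ge r L with hlt | hge
                · rw [F5b h hlt]; omega
                · have hrl : r = L := by omega
                  rw [hrl, F5a h hL1]; omega
              · rcases Nat.lt_or_ge c 2 with hc2 | hc2
                · have hcc1 : c = 1 := by omega
                  rw [hρr, hcc1, hx]
                  omega
                · have := F6 h ⟨hρ, hc⟩ (by omega) (by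
                    have := ge3 h ⟨hρ, by omega⟩ h1 (show 1 ≤ c - 1 by omega)
                    omega)
                  omega
            · -- ρ ≥ r+1 : width one
              have hc0 : c = 0 := by
                have := hw1 ρ hρr2 hρ
                omega
              subst hc0
              rcases Nat.lt_or_ge ρ (L+1) with hρL | hρL
              · -- value 1 or 2
                rcases Nat.lt_or_ge ρ L with hlt | hge
                · rw [F5b h hlt]; omega
                · have : ρ = L := by omega
                  rw [this, F5a h hL1]; omega
              · -- ρ ≥ L+1 and (by hρP) ρ ≥ m-1, so ρ = m-1
                have : ρ = m - 1 := by
                  have := hρP.2 hρL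
                  omega
                rw [this, hlast]
                omega
    rw [Finset.sum_congr rfl hval, ← Finset.card_filter]
    have hset : (Finset.range m).filter
        (fun ρ => (1 ≤ ρ ∧ ρ < r) ∨ (L + 1 ≤ ρ ∧ ρ < m - 1)) =
        Finset.Ico 1 r ∪ Finset.Ico (L+1) (m-1) := by
      ext ρ
      simp only [Finset.mem_filter, Finset.mem_range, Finset.mem_union, Finset.mem_Ico]
      omega
    rw [hset, Finset.card_union_of_disjoint (by
      rw [Finset.disjoint_left]
      intro ρ hρ1 hρ2
      simp only [Finset.mem_Ico] at hρ1 hρ2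
      omega)]
    rw [Nat.card_Ico, Nat.card_Ico]
    omega
  -- the sum identity gives m + r ≥ 2L + 2
  have hmsum : Wd mu 0 + Wd mu 1 + 2 * (r - 1) + (m - r - 1) = 2 * k - 1 := by
    have e := sum_widths mu
    rw [h.hsum] at e
    rw [Finset.range_eq_Ico] at e
    rw [← Finset.sum_Ico_consecutive _ (show (0:ℕ) ≤ 1 by omega) (show 1 ≤ m by omega)] at e
    rw [← Finset.sum_Ico_consecutive _ (show (1:ℕ) ≤ r + 1 by omega)
      (show r + 1 ≤ m by omega)] at e
    rw [← Finset.sum_Ico_consecutive _ (show (1:ℕ) ≤ 2 by omega)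
      (show 2 ≤ r + 1 by omega)] at e
    have e1 : ∑ ρ ∈ Finset.Ico 0 1, Wd mu ρ = Wd mu 0 := by simp
    have e2 : ∑ ρ ∈ Finset.Ico 1 2, Wd mu ρ = Wd mu 1 := by simp
    have e3 : ∑ ρ ∈ Finset.Ico 2 (r+1), Wd mu ρ = 2 * (r - 1) := by
      rw [Finset.sum_congr rfl (fun ρ hρ => by
        simp only [Finset.mem_Ico] at hρ
        exact hflat ρ hρ.1 (by omega))]
      simp [Nat.card_Ico]
      omega
    have e4 : ∑ ρ ∈ Finset.Ico (r+1) m, Wd mu ρ = m - r - 1 := by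
      rw [Finset.sum_congr rfl (fun ρ hρ => by
        simp only [Finset.mem_Ico] at hρ
        exact hw1 ρ hρ.1 hρ.2)]
      simp [Nat.card_Ico]
      omega
    rw [e1, e2, e3, e4] at e
    omega
  have hW10 : Wd mu 1 ≤ Wd mu 0 := Wanti h (by omega)
  have hLk : Wd mu 0 + L = k := L_add h
  have hmr : 2 * L + 2 ≤ m + r := by omega
  -- total counts
  have hc1 := count1_eq_L h
  have hcnt12 := cnt_one h
  have hcnt34 := cnt_two h
  -- helper for tail counts of a width-one-cells tail
  have htail : ∀ t, L ≤ t → t + 1 < m → r ≤ t →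
      (tlL mu T t 0).count 1 = 0 ∧ (tlL mu T t 0).count 3 = m - t - 2 := by
    intro t ht1 ht2 ht3
    have hcc : (∀ v, (tlL mu T t 0).count v =
        ∑ ρ ∈ Finset.Ico (t+1) m, rowcnt mu T ρ v) := by
      intro v
      rw [count_tlL]
      simp [hmdef]
    constructor
    · rw [hcc 1]
      apply Finset.sum_eq_zero
      intro ρ hρ
      simp only [Finset.mem_Ico] at hρ
      apply rowcnt_zero
      intro c hc
      have hc0 : c = 0 := by
        have := hw1 ρ (by omega) hρ.2
        omega
      subst hc0
      have := below_ge3 h ⟨hρ.2, Wpos h hρ.2⟩ (Or.inl (by omega)) (by omega)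
      omega
    · rw [hcc 3]
      have hval3 : ∀ ρ ∈ Finset.Ico (t+1) m, rowcnt mu T ρ 3 =
          if ρ < m - 1 then 1 else 0 := by
        intro ρ hρ
        simp only [Finset.mem_Ico] at hρ
        rw [rowcnt_width_one (hw1 ρ (by omega) hρ.2)]
        rcases Nat.lt_or_ge ρ (m-1) with h1 | h1
        · rw [hcol ρ (by omega) (by omega), if_pos rfl, if_pos h1]
        · have he : ρ = m - 1 := by omega
          rw [he, hlast, if_neg (by omega), if_neg (by omega)]
      rw [Finset.sum_congr rfl hval3]
      rw [← Finset.sum_Ico_consecutive _ (show t+1 ≤ m-1 by omega) (show m-1 ≤ m by omega)]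
      have e1 : ∑ ρ ∈ Finset.Ico (t+1) (m-1), (if ρ < m - 1 then 1 else 0) = m - t - 2 := by
        rw [Finset.sum_congr rfl (fun ρ hρ => by
          simp only [Finset.mem_Ico] at hρ
          rw [if_pos hρ.2])]
        simp [Nat.card_Ico]
        omega
      have e2 : ∑ ρ ∈ Finset.Ico (m-1) m, (if ρ < m - 1 then 1 else 0) = 0 := by
        apply Finset.sum_eq_zero
        intro ρ hρ
        simp only [Finset.mem_Ico] at hρ
        rw [if_neg (by omega)]
      omega
  -- final contradiction, two cases
  rcases Nat.lt_or_ge r L with hrL' | hrL''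
  · -- r < L : use the lattice condition at the cell (2L - r, 0)
    set t := 2 * L - r with htdef
    have ht1 : L + 1 ≤ t := by omega
    have ht2 : t + 1 < m := by omega
    have hcellt : IsCell mu t 0 := ⟨by omega, Wpos h (by omega)⟩
    obtain ⟨htl1, htl3⟩ := htail t (by omega) ht2 (by omega)
    have := use_lattice_B h hcellt (by
      rw [htl1, htl3]
      omega)
    exact this.2 (hcol t ht1 ht2)
  · -- r = L : use the lattice condition at the cell (L, 0)
    have hrL2 : r = L := by omega
    have hcellL : IsCell mu L 0 := ⟨by omega, Wpos h (by omega)⟩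
    obtain ⟨htl1, htl3⟩ := htail L (le_refl _) (by omega) (by omega)
    have := use_lattice_B h hcellL (by
      rw [htl1, htl3]
      omega)
    exact this.1 (F5a h hL1)

end TwoRowAux
namespace TwoRowAux

variable {k : ℕ} {mu : List ℕ} {T : ℕ × ℕ → ℕ}

lemma Wlt {ρ : ℕ} (hW : 0 < Wd mu ρ) : ρ < mu.length := by
  by_contra hge
  rw [Wd, List.getD_eq_default _ _ (by omega)] at hW
  omega

/-- the forced value of the cell `(r, c)` -/
def target (k : ℕ) (mu : List ℕ) (r c : ℕ) : ℕ :=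
  if r = 0 then (if c = 0 ∧ 1 ≤ k - Wd mu 0 then 1 else 2)
  else if 1 ≤ c then
    (if 2 ≤ c then 4
     else if k - Wd mu 0 < r then 4
     else if 2 ≤ Wd mu (r+1) then 3
     else if mu.length - 1 ≤ k - Wd mu 0 then 4 else 3)
  else
    (if r < k - Wd mu 0 then 1
     else if r = k - Wd mu 0 then 2
     else if r < mu.length - 1 then 3 else 4)

lemma forced (h : Good k mu T) {r c : ℕ} (hcell : IsCell mu r c) :
    T (r, c) = target k mu r c := by
  have hLeq : Ld mu T = k - Wd mu 0 := by
    have := L_add h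
    omega
  set L := Ld mu T with hLdef
  set m := mu.length with hmdef
  have hLm : L < m := L_lt h
  rw [target, ← hLeq, ← hmdef]
  rcases Nat.lt_or_ge r 1 with hr0 | hr1
  · -- row 0
    have hre : r = 0 := by omega
    subst hre
    rw [if_pos rfl]
    by_cases hc0 : c = 0 ∧ 1 ≤ L
    · rw [if_pos hc0]
      rw [hc0.1]
      exact F5b h (show 0 < L by omega)
    · rw [if_neg hc0]
      apply F5c h hcell
      rcases Nat.lt_or_ge c 1 with hcc | hcc
      · right
        have : c = 0 := by omega
        omega
      · left; exact hcc
  · rw [if_neg (by omega)]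
    rcases Nat.lt_or_ge c 1 with hc0 | hc1
    · -- first column
      have hce : c = 0 := by omega
      subst hce
      rw [if_neg (by omega)]
      rcases Nat.lt_or_ge r L with h1 | h2
      · rw [if_pos h1]
        exact F5b h h1
      · rcases Nat.eq_or_lt_of_le h2 with h3 | h4
        · rw [if_neg (by omega), if_pos h3.symm, ← h3]
          exact F5a h (by omega)
        · rw [if_neg (by omega), if_neg (by omega)]
          have h3T : 3 ≤ T (r, 0) := below_ge3 h hcell (Or.inl h4) hr1
          rcases Nat.lt_or_ge r (m - 1) with h5 | h6
          · rw [if_pos h5]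
            exact F7 h ⟨by omega, Wpos h (by omega)⟩ h3T
          · rw [if_neg (by omega)]
            apply F8 h hcell h3T
            intro y hy
            rcases mem_tlL hcell.1 hy with ⟨c', hc', _⟩ | ⟨ρ, c', hρ1, hρ2, _, _⟩
            · omega
            · omega
    · rw [if_pos hc1]
      rcases Nat.lt_or_ge c 2 with hc2 | hc2
      · -- c = 1
        have hce : c = 1 := by omega
        subst hce
        rw [if_neg (by omega)]
        rcases Nat.lt_or_ge L r with h1 | h2
        · rw [if_pos h1]
          apply F6 h hcell (by omega)
          exact below_ge3 h (cell_mono h hcell (le_refl _) (by omega)) (Or.inl h1) hr1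
        · rw [if_neg (by omega)]
          rcases Nat.lt_or_ge (Wd mu (r+1)) 2 with h3 | h4
          · rw [if_neg (by omega)]
            rcases Nat.lt_or_ge (m - 1) L with h5 | h6
            · -- impossible since L < m
              omega
            · rcases Nat.eq_or_lt_of_le h6 with h7 | h8
              · rw [if_pos (by omega)]
                apply F8 h hcell (ge3 h hcell hr1 (le_refl _))
                intro y hy
                rcases mem_tlL hcell.1 hy with ⟨c', hc', hy'⟩ | ⟨ρ, c', hρ1, hρ2, hc', hy'⟩
                · have : c' = 0 := by omega
                  subst this
                  rw [hy']
                  exact (L_iff h hr1 hcell.1).2 h2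
                · have hwρ : Wd mu ρ ≤ 1 := le_trans (Wanti h hρ1) (by omega)
                  have : c' = 0 := by omega
                  subst this
                  rw [hy']
                  exact (L_iff h (by omega) hρ2).2 (by omega)
              · rw [if_neg (by omega)]
                exact F9 h hcell hr1 h2 (by omega) (by omega)
          · rw [if_pos h4]
            exact F7 h ⟨Wlt (by omega), by omega⟩ (ge3 h hcell hr1 (le_refl _))
      · rw [if_pos hc2]
        apply F6 h hcell (by omega)
        exact ge3 h (cell_mono h hcell (le_refl _) (by omega)) hr1 (by omega)

lemma unique {T T' : ℕ × ℕ → ℕ} (hmu : IsPartitionList mu)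
    (hsum : mu.sum = 2 * k - 1) (hk : 2 ≤ k)
    (hT : T ∈ gSet [k, k-1] mu) (hT' : T' ∈ gSet [k, k-1] mu) : T = T' := by
  have h := good_of_mem hT hmu hsum hk
  have h' := good_of_mem hT' hmu hsum hk
  funext p
  obtain ⟨r, c⟩ := p
  by_cases hcell : IsCell mu r c
  · rw [forced h hcell, forced h' hcell]
  · rw [h.zero r c hcell, h'.zero r c hcell]

end TwoRowAux

/-- For every `k ≥ 2` and every partition `μ` of `2k - 1`, there is at most one
amenable tableau of shape `μ` and content `(k, k-1)`; i.e. `P_{(k,k-1)}` is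
multiplicity free. -/
theorem gCoeff_two_row_multfree (k : ℕ) (hk : 2 ≤ k) :
    ∀ mu : List ℕ, IsPartitionList mu → mu.sum = 2 * k - 1 →
      gCoeff [k, k - 1] mu ≤ 1 := by
  intro mu hmu hsum
  have hsub : (gSet [k, k-1] mu).Subsingleton := fun T hT T' hT' =>
    TwoRowAux.unique hmu hsum hk hT hT'
  rw [gCoeff]
  rcases hsub.eq_empty_or_singleton with he | ⟨a, ha⟩
  · rw [he]; simp
  · rw [ha]; simp
end

section
/- Let λ = (m, k, k−1, …, 2, 1) with m ≥ k+1 ≥ 2 (a near staircase whose top row exceeds a staircase of length k). Then every amenable tableau T with content λ contains no marked letter i' with i > 1, and consequently g_{λμ} ≤ 1 for every partition μ of m + k(k+1)/2. -/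
/-! ### Auxiliary lemmas -/

namespace NSAux
open List

lemma range_split {r n : ℕ} (h : r < n) :
    List.range n = List.range r ++ r :: List.range' (r+1) (n - (r+1)) := by
  rw [List.range_eq_range', List.range_eq_range']
  have h1 : List.range' 0 r ++ List.range' r (n - r) = List.range' 0 n := by
    have := List.range'_append (s := 0) (m := r) (n := n - r) (step := 1)
    simpa [Nat.sub_add_cancel h.le, Nat.add_comm, Nat.add_sub_of_le h.le] using this
  have h2 : List.range' r (n - r) = r :: List.range' (r+1) (n - (r+1)) := by
    have : n - r = (n - (r+1)) + 1 := by omega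
    rw [this, List.range'_succ]
  rw [← h1, h2]

lemma range'_zero_split {c h : ℕ} (hc : c < h) :
    (List.range' 0 h).reverse
      = (List.range' (c+1) (h - (c+1))).reverse ++ c :: (List.range' 0 c).reverse := by
  have h1 : List.range' 0 (c+1) ++ List.range' (c+1) (h - (c+1)) = List.range' 0 h := by
    have := List.range'_append (s := 0) (m := c+1) (n := h - (c+1)) (step := 1)
    simpa [Nat.sub_add_cancel hc, Nat.add_comm, Nat.add_sub_of_le (Nat.succ_le_of_lt hc)] using this
  have h2 : List.range' 0 (c+1) = List.range' 0 c ++ [c] := by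
    have := List.range'_append (s := 0) (m := c) (n := 1) (step := 1)
    simpa [Nat.add_comm] using this.symm
  rw [← h1, h2]
  simp

/-- row `r` of the reading word -/
def rowW (hi : ℕ → ℕ) (T : ℕ × ℕ → ℕ) (r : ℕ) : List ℕ :=
  ((List.range' 0 (hi r)).reverse).map fun c => T (r, c)

def rwPrefix (hi : ℕ → ℕ) (T : ℕ × ℕ → ℕ) (r c : ℕ) : List ℕ :=
  ((List.range r).flatMap (rowW hi T))
    ++ ((List.range' (c+1) (hi r - (c+1))).reverse).map fun c' => T (r, c')

def rwSuffix (nrows : ℕ) (hi : ℕ → ℕ) (T : ℕ × ℕ → ℕ) (r c : ℕ) : List ℕ :=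
  (((List.range' 0 c).reverse).map fun c' => T (r, c'))
    ++ (List.range' (r+1) (nrows - (r+1))).flatMap (rowW hi T)

lemma readingWord_eq_flatMap (nrows : ℕ) (hi : ℕ → ℕ) (T : ℕ × ℕ → ℕ) :
    readingWord nrows (fun _ => 0) hi T = (List.range nrows).flatMap (rowW hi T) := by
  rfl

lemma rw_split {nrows : ℕ} {hi : ℕ → ℕ} (T : ℕ × ℕ → ℕ) {r c : ℕ} (hr : r < nrows)
    (hc : c < hi r) :
    readingWord nrows (fun _ => 0) hi T
      = rwPrefix hi T r c ++ T (r, c) :: rwSuffix nrows hi T r c := by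
  rw [readingWord_eq_flatMap, range_split hr, List.flatMap_append, List.flatMap_cons]
  rw [rwPrefix, rwSuffix]
  have : rowW hi T r = (((List.range' (c+1) (hi r - (c+1))).reverse).map fun c' => T (r, c'))
      ++ T (r, c) :: ((List.range' 0 c).reverse).map fun c' => T (r, c') := by
    rw [rowW, range'_zero_split hc]
    simp
  rw [this]
  simp

lemma lattice_count_le {W : List ℕ} (hW : IsLatticeWord W) {Q : List ℕ} (hQ : Q <+: W)
    {i : ℕ} (hi : 1 ≤ i) : Q.count (2*(i+1)) ≤ Q.count (2*i) := by
  induction Q using List.reverseRecOn with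
  | nil => simp
  | append_singleton Q a ih =>
    have hQ' : Q <+: W := (List.prefix_append Q [a]).trans hQ
    have ih' := ih hQ'
    by_cases heq : Q.count (2*i) = Q.count (2*(i+1))
    · have := (hW Q a hQ i hi heq).1
      simp only [List.count_append, List.count_singleton', beq_iff_eq]
      split <;> split <;> omega
    · simp only [List.count_append, List.count_singleton', beq_iff_eq]
      split <;> split <;> omega

lemma count_shift (S : List ℕ) (t : ℕ) :
    (S.reverse.map (· + 1)).count (t + 1) = S.count t := by
  have := List.count_map_of_injective S.reverse (· + 1)
    (fun a b h => by simpa using h) t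
  simpa using this

lemma count_map_ite (t : ℕ) (f : ℕ → ℕ) (l : List ℕ) :
    (l.map f).count t = (l.map fun a => if f a = t then 1 else 0).sum := by
  induction l with
  | nil => simp
  | cons a l ih =>
    simp only [List.map_cons, List.count_cons, List.sum_cons, ih, beq_iff_eq]
    split <;> omega

lemma count12_len {l : List ℕ} (h : ∀ x ∈ l, x = 1 ∨ x = 2) :
    l.count 1 + l.count 2 = l.length := by
  induction l with
  | nil => simp
  | cons a l ih =>
    have ha := h a (by simp)
    have ih' := ih fun x hx => h x (by simp [hx])
    simp only [List.count_cons, List.length_cons, beq_iff_eq]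
    rcases ha with h1 | h1 <;> subst h1 <;> simp <;> omega

lemma prefix_aug {W Q S : List ℕ} {x : ℕ} (hsplit : W = Q ++ x :: S) :
    (W ++ S.reverse.map (· + 1)) ++ [x + 1] <+: W ++ (W.reverse).map (· + 1) := by
  refine ⟨Q.reverse.map (· + 1), ?_⟩
  subst hsplit
  simp only [List.reverse_append, List.reverse_cons, List.map_append, List.append_assoc,
    List.map_cons, List.cons_append, List.singleton_append, List.map_reverse]
  simp

lemma augWord_eq (nrows : ℕ) (lo hi : ℕ → ℕ) (T : ℕ × ℕ → ℕ) :
    augWord nrows lo hi T = ((readingWord nrows lo hi T).reverse).map (· + 1) := rfl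

lemma staircase_getD (k j : ℕ) : (staircase k).getD j 0 = k - j := by
  unfold staircase
  by_cases h : j < k
  · rw [List.getD_eq_getElem _ _ (by simpa using h)]
    simp
  · rw [List.getD_eq_default]
    · omega
    · simpa using Nat.le_of_not_lt h

lemma lam_getD (m k j : ℕ) :
    ((m :: staircase k) : List ℕ).getD j 0 = if j = 0 then m else k + 1 - j := by
  cases j with
  | zero => simp
  | succ j =>
    simp only [List.getD_cons_succ, staircase_getD]
    rw [if_neg (by omega)]
    omega

lemma mem_readingWord {nrows : ℕ} {lo hi : ℕ → ℕ} {T : ℕ × ℕ → ℕ} {r c : ℕ}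
    (h : InDiagram nrows lo hi (r, c)) : T (r, c) ∈ readingWord nrows lo hi T := by
  have h1 : r < nrows := h.1
  have h2 : lo r ≤ c := h.2.1
  have h3 : c < hi r := h.2.2
  simp only [readingWord, List.mem_flatMap]
  refine ⟨r, by simpa using h1, ?_⟩
  simp only [List.mem_map, List.mem_reverse, List.mem_range'_1]
  exact ⟨c, ⟨h2, by omega⟩, rfl⟩

lemma marked_count_zero {m k : ℕ} {nrows : ℕ} {lo hi : ℕ → ℕ} {T : ℕ × ℕ → ℕ}
    (hlat : IsLatticeWord (readingWord nrows lo hi T ++ augWord nrows lo hi T))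
    (hmk : ∀ i : ℕ, 1 ≤ i → ∀ p : ℕ, (readingWord nrows lo hi T)[p]? = some (2 * i - 1) →
      ∃ q : ℕ, p < q ∧ (readingWord nrows lo hi T)[q]? = some (2 * i))
    (hcont : HasContent nrows lo hi T (m :: staircase k)) :
    ∀ i : ℕ, 2 ≤ i → (readingWord nrows lo hi T).count (2 * i - 1) = 0 := by
  set w := readingWord nrows lo hi T with hw
  have hct : ∀ i : ℕ, 1 ≤ i →
      w.count (2*i) + w.count (2*i - 1) = (if i - 1 = 0 then m else k + 1 - (i-1)) := by
    intro i hi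
    have := hcont i hi
    rw [lam_getD] at this
    exact this
  suffices H : ∀ d i : ℕ, 2 ≤ i → k + 2 ≤ i + d → w.count (2 * i - 1) = 0 by
    intro i hI; exact H (k+2) i hI (by omega)
  intro d
  induction d with
  | zero =>
    intro i hI hik
    have h1 := hct i (by omega)
    rw [if_neg (by omega)] at h1
    omega
  | succ d ih =>
    intro i hI hik
    by_cases hd : k + 2 ≤ i + d
    · exact ih i hI hd
    have hik2 : i ≤ k + 1 := by omega
    by_contra hne
    have hpos : 0 < w.count (2*i - 1) := Nat.pos_of_ne_zero hne
    have hmem : (2*i - 1) ∈ w := List.count_pos_iff.mp hpos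
    obtain ⟨p0, hp0l, hp0⟩ := List.mem_iff_getElem.mp hmem
    obtain ⟨q0, hq0p, hq0⟩ := hmk i (by omega) p0 (by rw [List.getElem?_eq_getElem hp0l, hp0])
    have hq0len : q0 < w.length := by
      by_contra h
      rw [List.getElem?_eq_none (by omega)] at hq0
      exact nomatch hq0
    have hPmax : ∀ q, Nat.findGreatest (fun p => w[p]? = some (2*i)) w.length < q →
        w[q]? ≠ some (2*i) := by
      intro q hq
      by_cases hql : q ≤ w.length
      · exact Nat.findGreatest_is_greatest hq hql
      · intro hPq
        rw [List.getElem?_eq_none (by omega)] at hPq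
        exact nomatch hPq
    set p' := Nat.findGreatest (fun p => w[p]? = some (2*i)) w.length with hp'
    have hPp' : w[p']? = some (2*i) := by
      rw [hp']
      exact Nat.findGreatest_spec (P := fun p => w[p]? = some (2*i)) (n := w.length) (m := q0) (by omega) hq0
    have hp'len : p' < w.length := by
      by_contra h
      rw [List.getElem?_eq_none (by omega)] at hPp'
      exact nomatch hPp'
    have hgp' : w[p'] = 2*i := by
      rw [List.getElem?_eq_getElem hp'len] at hPp'
      exact Option.some.inj hPp'
    have hsplit : w = w.take p' ++ (2*i) :: w.drop (p'+1) := by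
      conv_lhs => rw [← List.take_append_drop p' w]
      rw [List.drop_eq_getElem_cons hp'len, hgp']
    set S := w.drop (p'+1) with hS
    have hSno : S.count (2*i - 1) = 0 := by
      rw [List.count_eq_zero]
      intro hmem'
      obtain ⟨j, hj, hj2⟩ := List.mem_iff_getElem.mp hmem'
      have hg : w[p' + 1 + j]? = some (2*i - 1) := by
        rw [← List.getElem?_drop, List.getElem?_eq_getElem hj, hj2]
      obtain ⟨q, hq1, hq2⟩ := hmk i (by omega) _ hg
      exact hPmax q (by omega) hq2
    have hIH : w.count (2*(i+1) - 1) = 0 := ih (i+1) (by omega) (by omega)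
    have hSno2 : S.count (2*(i+1) - 1) = 0 := by
      have hle : S.count (2*(i+1)-1) ≤ w.count (2*(i+1)-1) := by
        conv_rhs => rw [hsplit]
        simp only [List.count_append, List.count_cons]
        omega
      omega
    have hpre : (w ++ S.reverse.map (· + 1)) ++ [2*i + 1] <+: w ++ augWord nrows lo hi T := by
      rw [augWord_eq]
      exact prefix_aug hsplit
    set Q := w ++ S.reverse.map (· + 1) with hQ
    have hQpre : Q <+: w ++ augWord nrows lo hi T :=
      (List.prefix_append Q [2*i+1]).trans hpre
    have hle2 := lattice_count_le hlat hQpre (i := i) (by omega)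
    have hneq : ¬ (Q.count (2*i) = Q.count (2*(i+1))) := by
      intro heq
      exact (hlat Q (2*i+1) hpre i (by omega) heq).2 rfl
    have hcQ1 : Q.count (2*i) = w.count (2*i) + S.count (2*i - 1) := by
      rw [hQ, List.count_append]
      congr 1
      have := count_shift S (2*i - 1)
      rw [Nat.sub_add_cancel (by omega)] at this
      exact this
    have hcQ2 : Q.count (2*(i+1)) = w.count (2*(i+1)) + S.count (2*(i+1) - 1) := by
      rw [hQ, List.count_append]
      congr 1
      have := count_shift S (2*(i+1) - 1)
      rw [Nat.sub_add_cancel (by omega)] at this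
      exact this
    have hc_i := hct i (by omega)
    have hc_i1 := hct (i+1) (by omega)
    rw [if_neg (by omega)] at hc_i
    rw [if_neg (by omega)] at hc_i1
    omega

section Part2

variable {mu : List ℕ} {T : ℕ × ℕ → ℕ}

lemma getD_anti (hmu : IsPartitionList mu) {r r' : ℕ} (h : r ≤ r') (h' : r' < mu.length) :
    mu.getD r' 0 ≤ mu.getD r 0 := by
  rcases Nat.eq_or_lt_of_le h with rfl | hlt
  · exact le_refl _
  · have hr : r < mu.length := lt_trans hlt h'
    rw [List.getD_eq_getElem _ _ h', List.getD_eq_getElem _ _ hr]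
    exact List.pairwise_iff_getElem.mp hmu.1 r r' hr h' hlt

lemma part_pos (hmu : IsPartitionList mu) {r : ℕ} (h : r < mu.length) : 0 < mu.getD r 0 := by
  rw [List.getD_eq_getElem _ _ h]
  exact hmu.2 _ (List.getElem_mem h)

lemma indiag_iff {r c : ℕ} :
    InDiagram mu.length (fun _ => 0) (fun r => mu.getD r 0) (r, c) ↔
      r < mu.length ∧ c < mu.getD r 0 := by
  simp [InDiagram]

lemma row_mono (hA : IsAmenable mu.length (fun _ => 0) (fun r => mu.getD r 0) T)
    {r c c' : ℕ} (h : c ≤ c') (hd : r < mu.length) (hc' : c' < mu.getD r 0) :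
    T (r, c) ≤ T (r, c') := by
  obtain ⟨-, -, hrow, -⟩ := hA
  induction c', h using Nat.le_induction with
  | base => exact le_refl _
  | succ c'' hcc ih =>
    have hc'' : c'' < mu.getD r 0 := by omega
    exact le_trans (ih hc'') (hrow r c'' (indiag_iff.mpr ⟨hd, hc''⟩) (indiag_iff.mpr ⟨hd, hc'⟩))

lemma col_mono (hmu : IsPartitionList mu)
    (hA : IsAmenable mu.length (fun _ => 0) (fun r => mu.getD r 0) T)
    {r r' c : ℕ} (h : r ≤ r') (hd : r' < mu.length) (hc : c < mu.getD r' 0) :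
    T (r, c) ≤ T (r', c) := by
  obtain ⟨-, -, -, hcol, -⟩ := hA
  induction r', h using Nat.le_induction with
  | base => exact le_refl _
  | succ r'' hrr ih =>
    have hr'' : r'' < mu.length := by omega
    have hcr'' : c < mu.getD r'' 0 := lt_of_lt_of_le hc (getD_anti hmu (by omega) hd)
    exact le_trans (ih hr'' hcr'')
      (hcol r'' c (indiag_iff.mpr ⟨hr'', hcr''⟩) (indiag_iff.mpr ⟨hd, hc⟩))

variable {m k : ℕ}

lemma no_marked (hA : IsAmenable mu.length (fun _ => 0) (fun r => mu.getD r 0) T)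
    (hC : HasContent mu.length (fun _ => 0) (fun r => mu.getD r 0) T (m :: staircase k)) :
    ∀ i, 2 ≤ i →
      (readingWord mu.length (fun _ => 0) (fun r => mu.getD r 0) T).count (2*i-1) = 0 := by
  intro i hi
  exact marked_count_zero hA.2.2.2.2.2.2.1 hA.2.2.2.2.2.2.2 hC i hi

lemma cell_cases (hA : IsAmenable mu.length (fun _ => 0) (fun r => mu.getD r 0) T)
    (hC : HasContent mu.length (fun _ => 0) (fun r => mu.getD r 0) T (m :: staircase k))
    {r c : ℕ} (hd : r < mu.length) (hc : c < mu.getD r 0) :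
    T (r, c) = 1 ∨ ∃ v, 1 ≤ v ∧ T (r, c) = 2 * v := by
  have hpos : 1 ≤ T (r, c) := hA.1 _ (indiag_iff.mpr ⟨hd, hc⟩)
  rcases Nat.even_or_odd (T (r, c)) with ⟨v, hv⟩ | ⟨j, hj⟩
  · right; exact ⟨v, by omega, by omega⟩
  · rcases Nat.eq_zero_or_pos j with rfl | hj1
    · left; omega
    · exfalso
      have h0 := no_marked hA hC (j+1) (by omega)
      rw [List.count_eq_zero] at h0
      apply h0
      have hmem : T (r, c) ∈ readingWord mu.length (fun _ => 0) (fun r => mu.getD r 0) T :=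
        mem_readingWord (indiag_iff.mpr ⟨hd, hc⟩)
      have : 2*(j+1) - 1 = T (r, c) := by omega
      rwa [this]

lemma value_le (hA : IsAmenable mu.length (fun _ => 0) (fun r => mu.getD r 0) T) :
    ∀ v r c, r < mu.length → c < mu.getD r 0 → T (r, c) = 2 * v → v ≤ r + 1 := by
  intro v
  induction v using Nat.strong_induction_on with
  | _ v ih =>
    intro r c hr hc hT
    by_cases hv2 : v ≤ 1
    · omega
    have hlat := hA.2.2.2.2.2.2.1
    have hsplit := rw_split (nrows := mu.length) (hi := fun r => mu.getD r 0) T hr hc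
    have hpre1 : rwPrefix (fun r => mu.getD r 0) T r c ++ [T (r, c)]
        <+: readingWord mu.length (fun _ => 0) (fun r => mu.getD r 0) T := by
      refine ⟨rwSuffix mu.length (fun r => mu.getD r 0) T r c, ?_⟩
      rw [hsplit]
      simp
    have hpre : rwPrefix (fun r => mu.getD r 0) T r c ++ [T (r, c)]
        <+: readingWord mu.length (fun _ => 0) (fun r => mu.getD r 0) T
            ++ augWord mu.length (fun _ => 0) (fun r => mu.getD r 0) T :=
      hpre1.trans (List.prefix_append _ _)
    have hQpre : rwPrefix (fun r => mu.getD r 0) T r c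
        <+: readingWord mu.length (fun _ => 0) (fun r => mu.getD r 0) T
            ++ augWord mu.length (fun _ => 0) (fun r => mu.getD r 0) T :=
      (List.prefix_append _ [T (r, c)]).trans hpre
    have hx : T (r, c) = 2*((v-1)+1) := by omega
    have hinv := lattice_count_le hlat hQpre (i := v-1) (by omega)
    have hne : ¬ ((rwPrefix (fun r => mu.getD r 0) T r c).count (2*(v-1))
        = (rwPrefix (fun r => mu.getD r 0) T r c).count (2*((v-1)+1))) := fun heq =>
      (hlat _ (T (r, c)) hpre (v-1) (by omega) heq).1 hx
    have hcnt : 1 ≤ (rwPrefix (fun r => mu.getD r 0) T r c).count (2*(v-1)) := by omega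
    have hmemQ : (2*(v-1)) ∈ rwPrefix (fun r => mu.getD r 0) T r c :=
      List.one_le_count_iff.mp hcnt
    rw [rwPrefix, List.mem_append] at hmemQ
    rcases hmemQ with hm1 | hm2
    · obtain ⟨r', hr', hmem'⟩ := List.mem_flatMap.mp hm1
      obtain ⟨c', hc', hTc'⟩ := List.mem_map.mp hmem'
      have hr'r : r' < r := List.mem_range.mp hr'
      have hc'lt : c' < mu.getD r' 0 := by
        have h2 : 0 ≤ c' ∧ c' < 0 + mu.getD r' 0 := by
          simpa using List.mem_range'_1.mp (List.mem_reverse.mp hc')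
        omega
      have hv1 : v - 1 ≤ r' + 1 := by
        rcases Nat.lt_or_ge (v-1) 2 with h | h
        · omega
        · exact ih (v-1) (by omega) r' c' (by omega) hc'lt hTc'
      omega
    · exfalso
      obtain ⟨c', hc', hTc'⟩ := List.mem_map.mp hm2
      have hcc' : c < c' ∧ c' < mu.getD r 0 := by
        have h2 : c + 1 ≤ c' ∧ c' < (c+1) + (mu.getD r 0 - (c+1)) := by
          simpa using List.mem_range'_1.mp (List.mem_reverse.mp hc')
        omega
      have := row_mono hA (le_of_lt hcc'.1) hr hcc'.2
      omega

lemma row0_le (hA : IsAmenable mu.length (fun _ => 0) (fun r => mu.getD r 0) T)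
    (hC : HasContent mu.length (fun _ => 0) (fun r => mu.getD r 0) T (m :: staircase k))
    {c : ℕ} (h0 : 0 < mu.length) (hc : c < mu.getD 0 0) : T (0, c) = 1 ∨ T (0, c) = 2 := by
  rcases cell_cases hA hC h0 hc with h | ⟨v, hv1, hv2⟩
  · left; exact h
  · right
    have := value_le hA v 0 c h0 hc hv2
    omega

lemma row0_eq_two (hA : IsAmenable mu.length (fun _ => 0) (fun r => mu.getD r 0) T)
    (hC : HasContent mu.length (fun _ => 0) (fun r => mu.getD r 0) T (m :: staircase k))
    {c : ℕ} (h0 : 0 < mu.length) (hc1 : 1 ≤ c) (hc : c < mu.getD 0 0) : T (0, c) = 2 := by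
  rcases row0_le hA hC h0 hc with h1 | h2
  · exfalso
    have hd0 : (0 : ℕ) < mu.getD 0 0 := by omega
    have hle : T (0, 0) ≤ T (0, c) := row_mono hA (by omega) h0 hc
    have hpos : 1 ≤ T (0, 0) := hA.1 _ (indiag_iff.mpr ⟨h0, hd0⟩)
    have h00 : T (0, 0) = 1 := by omega
    have h5 := hA.2.2.2.2.1
    exact h5 0 0 c 1 (by omega) (by omega) (indiag_iff.mpr ⟨h0, hd0⟩)
      (indiag_iff.mpr ⟨h0, hc⟩) ⟨by omega, by omega⟩
  · exact h2

lemma inner_cells (hmu : IsPartitionList mu)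
    (hA : IsAmenable mu.length (fun _ => 0) (fun r => mu.getD r 0) T)
    (hC : HasContent mu.length (fun _ => 0) (fun r => mu.getD r 0) T (m :: staircase k)) :
    ∀ r c, 1 ≤ r → r < mu.length → 1 ≤ c → c < mu.getD r 0 → T (r, c) = 2 * (r + 1) := by
  intro r
  induction r with
  | zero => omega
  | succ r ihr =>
    intro c _ hr hc1 hc
    have h5 := hA.2.2.2.2.1
    have h6 := hA.2.2.2.2.2.1
    have hrlen : r < mu.length := by omega
    have hcr : c < mu.getD r 0 := lt_of_lt_of_le hc (getD_anti hmu (by omega) hr)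
    have hd : InDiagram mu.length (fun _ => 0) (fun r => mu.getD r 0) (r+1, c) :=
      indiag_iff.mpr ⟨hr, hc⟩
    have hge : 2*(r+1) + 1 ≤ T (r+1, c) := by
      rcases Nat.eq_zero_or_pos r with rfl | hr1
      · -- row 1
        simp only [Nat.zero_add] at hd hr hc hcr ⊢
        by_contra hlt
        have hpos : 1 ≤ T (1, c) := hA.1 _ hd
        have h0c : c < mu.getD 0 0 := lt_of_lt_of_le hc (getD_anti hmu (by omega) hr)
        have h12 : T (1, c) = 1 ∨ T (1, c) = 2 := by omega
        rcases h12 with hTv | hTv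
        · have hd10 : (0:ℕ) < mu.getD 1 0 := by omega
          have hle : T (1, 0) ≤ T (1, c) := row_mono hA (by omega) hr hc
          have hpos0 : 1 ≤ T (1, 0) := hA.1 _ (indiag_iff.mpr ⟨hr, hd10⟩)
          exact h5 1 0 c 1 (by omega) (by omega) (indiag_iff.mpr ⟨hr, hd10⟩) hd
            ⟨by omega, by omega⟩
        · have h0 : T (0, c) = 2 := row0_eq_two hA hC (by omega) hc1 h0c
          exact h6 0 1 c 1 (by omega) (by omega) (indiag_iff.mpr ⟨by omega, h0c⟩) hd
            ⟨by omega, by omega⟩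
      · -- r ≥ 1
        have hup : T (r, c) = 2 * (r + 1) := ihr c hr1 hrlen hc1 hcr
        have hle : T (r, c) ≤ T (r+1, c) := col_mono hmu hA (by omega) hr hc
        have hne : T (r+1, c) ≠ 2 * (r + 1) := by
          intro heq
          exact h6 r (r+1) c (r+1) (by omega) (by omega) (indiag_iff.mpr ⟨hrlen, hcr⟩) hd
            ⟨hup, heq⟩
        omega
    rcases cell_cases hA hC hr hc with h | ⟨v, hv1, hv2⟩
    · omega
    · have hub := value_le hA v (r+1) c hr hc hv2
      omega

lemma exists_l (hmu : IsPartitionList mu)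
    (hA : IsAmenable mu.length (fun _ => 0) (fun r => mu.getD r 0) T)
    (hC : HasContent mu.length (fun _ => 0) (fun r => mu.getD r 0) T (m :: staircase k))
    (h0 : 0 < mu.length) :
    ∃ l, 1 ≤ l ∧ l ≤ mu.length ∧ (∀ r, r < l → T (r, 0) ≤ 2) ∧
      (∀ r, l ≤ r → r < mu.length → 3 ≤ T (r, 0)) := by
  classical
  have hfin : ∃ n, mu.length ≤ n ∨ 3 ≤ T (n, 0) := ⟨mu.length, Or.inl le_rfl⟩
  refine ⟨Nat.find hfin, ?_, ?_, ?_, ?_⟩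
  · rcases Nat.eq_zero_or_pos (Nat.find hfin) with h | h
    · exfalso
      have hPl := Nat.find_spec hfin
      rw [h] at hPl
      have h00 : T (0, 0) = 1 ∨ T (0, 0) = 2 := row0_le hA hC h0 (part_pos hmu h0)
      rcases hPl with h' | h' <;> omega
    · exact h
  · exact Nat.find_min' hfin (Or.inl le_rfl)
  · intro r hr
    have := Nat.find_min hfin hr
    push_neg at this
    omega
  · intro r hlr hrlen
    have hPl := Nat.find_spec hfin
    rcases hPl with h | h
    · omega
    · have := col_mono hmu hA hlr hrlen (part_pos hmu hrlen)
      omega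

lemma col0_pattern (hmu : IsPartitionList mu)
    (hA : IsAmenable mu.length (fun _ => 0) (fun r => mu.getD r 0) T)
    (hC : HasContent mu.length (fun _ => 0) (fun r => mu.getD r 0) T (m :: staircase k))
    {l : ℕ} (hl1 : 1 ≤ l) (hl2 : l ≤ mu.length)
    (hsmall : ∀ r, r < l → T (r, 0) ≤ 2)
    (hbig : ∀ r, l ≤ r → r < mu.length → 3 ≤ T (r, 0)) :
    ∀ r, r < l → T (r, 0) = if r + 1 = l then 2 else 1 := by
  intro r hr
  have hrlen : r < mu.length := by omega
  have hc0 : 0 < mu.getD r 0 := part_pos hmu hrlen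
  have hdiag : InDiagram mu.length (fun _ => 0) (fun r => mu.getD r 0) (r, 0) :=
    indiag_iff.mpr ⟨hrlen, hc0⟩
  have hpos : 1 ≤ T (r, 0) := hA.1 _ hdiag
  have hle2 : T (r, 0) ≤ 2 := hsmall r hr
  by_cases hrl : r + 1 = l
  · rw [if_pos hrl]
    by_contra hne
    have h1 : T (r, 0) = 1 := by omega
    have h8 := hA.2.2.2.2.2.2.2
    have hsplit := rw_split (nrows := mu.length) (hi := fun r => mu.getD r 0) T hrlen hc0
    have hp : (readingWord mu.length (fun _ => 0) (fun r => mu.getD r 0) T)[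
        (rwPrefix (fun r => mu.getD r 0) T r 0).length]? = some (2 * 1 - 1) := by
      rw [hsplit, List.getElem?_append_right le_rfl]
      simp [h1]
    obtain ⟨q, hq1, hq2⟩ := h8 1 (by omega) _ hp
    have hmem2 : (2:ℕ) ∈ T (r, 0) :: rwSuffix mu.length (fun r => mu.getD r 0) T r 0 := by
      rw [hsplit, List.getElem?_append_right (by omega)] at hq2
      have : (2:ℕ) = 2 * 1 := rfl
      exact List.mem_of_getElem? (by rw [← this] at hq2; exact hq2)
    rcases List.mem_cons.mp hmem2 with h2 | hmem
    · omega
    · rw [rwSuffix] at hmem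
      simp only [List.range'_zero, List.reverse_nil, List.map_nil, List.nil_append] at hmem
      obtain ⟨r', hr', hmem'⟩ := List.mem_flatMap.mp hmem
      obtain ⟨c', hc', hTc'⟩ := List.mem_map.mp hmem'
      have hr'b : r + 1 ≤ r' ∧ r' < mu.length := by
        have := List.mem_range'_1.mp hr'
        omega
      have hc'b : c' < mu.getD r' 0 := by
        have h2 : 0 ≤ c' ∧ c' < 0 + mu.getD r' 0 := by
          simpa using List.mem_range'_1.mp (List.mem_reverse.mp hc')
        omega
      rcases Nat.eq_zero_or_pos c' with rfl | hc'1
      · have := hbig r' (by omega) hr'b.2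
        omega
      · have := inner_cells hmu hA hC r' c' (by omega) hr'b.2 hc'1 hc'b
        omega
  · rw [if_neg hrl]
    by_contra hne
    have h2 : T (r, 0) = 2 := by omega
    have hr1l : r + 1 < l := by omega
    have hnext : T (r + 1, 0) ≤ 2 := hsmall _ hr1l
    have hr1len : r + 1 < mu.length := by omega
    have hmono : T (r, 0) ≤ T (r + 1, 0) :=
      col_mono hmu hA (by omega) hr1len (part_pos hmu hr1len)
    have h6 := hA.2.2.2.2.2.1
    exact h6 r (r+1) 0 1 (by omega) (by omega) hdiag
      (indiag_iff.mpr ⟨hr1len, part_pos hmu hr1len⟩) ⟨by omega, by omega⟩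

lemma rowW_count_eq (hmu : IsPartitionList mu)
    (hA : IsAmenable mu.length (fun _ => 0) (fun r => mu.getD r 0) T)
    (hC : HasContent mu.length (fun _ => 0) (fun r => mu.getD r 0) T (m :: staircase k))
    {r t : ℕ} (hr : r < mu.length) (ht : 3 ≤ t) :
    (rowW (fun r => mu.getD r 0) T r).count t
      = (if T (r, 0) = t then 1 else 0)
        + (if 1 ≤ r ∧ t = 2*(r+1) then mu.getD r 0 - 1 else 0) := by
  have hpos := part_pos hmu hr
  rw [rowW, List.map_reverse, List.count_reverse]
  have hsplit : List.range' 0 (mu.getD r 0) = 0 :: List.range' 1 (mu.getD r 0 - 1) := by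
    have h' : mu.getD r 0 = (mu.getD r 0 - 1) + 1 := by omega
    conv_lhs => rw [h']
    rw [List.range'_succ]
  rw [hsplit, List.map_cons, List.count_cons]
  rcases Nat.eq_zero_or_pos r with rfl | hr1
  · have hz : ((List.range' 1 (mu.getD 0 0 - 1)).map fun c => T (0, c)).count t = 0 := by
      rw [List.count_eq_zero]
      intro hmem
      obtain ⟨c', hc', hTc'⟩ := List.mem_map.mp hmem
      have hb := List.mem_range'_1.mp hc'
      have := row0_le hA hC hr (show c' < mu.getD 0 0 by omega)
      omega
    rw [hz]
    have h00 := row0_le hA hC hr hpos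
    have hn1 : ¬ (T (0, 0) = t) := by omega
    have hn2 : ¬ ((1:ℕ) ≤ 0 ∧ t = 2*(0+1)) := by omega
    simp [hn1, hn2]
  · have hrep : (List.range' 1 (mu.getD r 0 - 1)).map (fun c => T (r, c))
        = List.replicate (mu.getD r 0 - 1) (2*(r+1)) := by
      have hmem : ∀ b ∈ (List.range' 1 (mu.getD r 0 - 1)).map (fun c => T (r, c)),
          b = 2*(r+1) := by
        intro b hb
        obtain ⟨c', hc', hTc'⟩ := List.mem_map.mp hb
        have hcb := List.mem_range'_1.mp hc'
        rw [← hTc']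
        exact inner_cells hmu hA hC r c' hr1 hr (by omega) (by omega)
      have := List.eq_replicate_of_mem hmem
      rwa [List.length_map, List.length_range'] at this
    rw [hrep, List.count_replicate]
    simp only [beq_iff_eq]
    rcases eq_or_ne (2*(r+1)) t with he | he
    · rw [if_pos he, if_pos (show (1 ≤ r ∧ t = 2*(r+1)) from ⟨hr1, he.symm⟩)]
      omega
    · rw [if_neg he, if_neg (show ¬ (1 ≤ r ∧ t = 2*(r+1)) from fun hcon => he hcon.2.symm)]
      omega

lemma count_w_split (hmu : IsPartitionList mu)
    (hA : IsAmenable mu.length (fun _ => 0) (fun r => mu.getD r 0) T)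
    (hC : HasContent mu.length (fun _ => 0) (fun r => mu.getD r 0) T (m :: staircase k))
    {l : ℕ} (hl1 : 1 ≤ l) (hl2 : l ≤ mu.length)
    (hsmall : ∀ r, r < l → T (r, 0) ≤ 2)
    {t : ℕ} (ht : 3 ≤ t) :
    (readingWord mu.length (fun _ => 0) (fun r => mu.getD r 0) T).count t
      = (∑ r ∈ Finset.range mu.length, if 1 ≤ r ∧ t = 2*(r+1) then mu.getD r 0 - 1 else 0)
        + ((List.range (mu.length - l)).map fun j => T (l + j, 0)).count t := by
  rw [readingWord_eq_flatMap, List.count_flatMap]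
  have hsum : ((List.range mu.length).map (List.count t ∘ rowW (fun r => mu.getD r 0) T)).sum
      = ∑ r ∈ Finset.range mu.length, (rowW (fun r => mu.getD r 0) T r).count t := rfl
  rw [hsum]
  have hrow : ∀ r ∈ Finset.range mu.length, (rowW (fun r => mu.getD r 0) T r).count t
      = ((if T (r, 0) = t then 1 else 0)
          + (if 1 ≤ r ∧ t = 2*(r+1) then mu.getD r 0 - 1 else 0)) :=
    fun r hrr => rowW_count_eq hmu hA hC (Finset.mem_range.mp hrr) ht
  rw [Finset.sum_congr rfl hrow, Finset.sum_add_distrib, Nat.add_comm]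
  congr 1
  rw [Finset.range_eq_Ico, ← Finset.sum_Ico_consecutive _ (Nat.zero_le l) hl2]
  have hz : ∑ r ∈ Finset.Ico 0 l, (if T (r, 0) = t then 1 else 0) = 0 := by
    apply Finset.sum_eq_zero
    intro r hrr
    have := hsmall r (Finset.mem_Ico.mp hrr).2
    rw [if_neg (by omega)]
  rw [hz, Nat.zero_add, Finset.sum_Ico_eq_sum_range, count_map_ite]
  rfl

lemma count12_w (hmu : IsPartitionList mu)
    (hA : IsAmenable mu.length (fun _ => 0) (fun r => mu.getD r 0) T)
    (hC : HasContent mu.length (fun _ => 0) (fun r => mu.getD r 0) T (m :: staircase k))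
    {l : ℕ} (hl1 : 1 ≤ l) (hl2 : l ≤ mu.length)
    (hsmall : ∀ r, r < l → T (r, 0) ≤ 2)
    (hbig : ∀ r, l ≤ r → r < mu.length → 3 ≤ T (r, 0)) :
    (readingWord mu.length (fun _ => 0) (fun r => mu.getD r 0) T).count 1
      + (readingWord mu.length (fun _ => 0) (fun r => mu.getD r 0) T).count 2
      = mu.getD 0 0 + (l - 1) := by
  have h0 : 0 < mu.length := by omega
  have hrowF : ∀ r, r < mu.length →
      (rowW (fun r => mu.getD r 0) T r).count 1 + (rowW (fun r => mu.getD r 0) T r).count 2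
        = (if r = 0 then mu.getD 0 0 else if r < l then 1 else 0) := by
    intro r hr
    have hpos := part_pos hmu hr
    rcases Nat.eq_zero_or_pos r with rfl | hr1
    · rw [if_pos rfl]
      have hlen : (rowW (fun r => mu.getD r 0) T 0).length = mu.getD 0 0 := by
        rw [rowW, List.length_map, List.length_reverse, List.length_range']
      rw [← hlen]
      apply count12_len
      intro x hx
      obtain ⟨c', hc', hTc'⟩ := List.mem_map.mp hx
      have h2 : 0 ≤ c' ∧ c' < 0 + mu.getD 0 0 := by
        simpa using List.mem_range'_1.mp (List.mem_reverse.mp hc')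
      rw [← hTc']
      exact row0_le hA hC h0 (by omega)
    · rw [if_neg (by omega)]
      rw [rowW, List.map_reverse, List.count_reverse, List.count_reverse]
      have hsplit : List.range' 0 (mu.getD r 0) = 0 :: List.range' 1 (mu.getD r 0 - 1) := by
        have h' : mu.getD r 0 = (mu.getD r 0 - 1) + 1 := by omega
        conv_lhs => rw [h']
        rw [List.range'_succ]
      rw [hsplit, List.map_cons, List.count_cons, List.count_cons]
      have hrep : (List.range' 1 (mu.getD r 0 - 1)).map (fun c => T (r, c))
          = List.replicate (mu.getD r 0 - 1) (2*(r+1)) := by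
        have hmem : ∀ b ∈ (List.range' 1 (mu.getD r 0 - 1)).map (fun c => T (r, c)),
            b = 2*(r+1) := by
          intro b hb
          obtain ⟨c', hc', hTc'⟩ := List.mem_map.mp hb
          have hcb := List.mem_range'_1.mp hc'
          rw [← hTc']
          exact inner_cells hmu hA hC r c' hr1 hr (by omega) (by omega)
        have := List.eq_replicate_of_mem hmem
        rwa [List.length_map, List.length_range'] at this
      rw [hrep, List.count_replicate, List.count_replicate]
      have hTpos : 1 ≤ T (r, 0) := hA.1 _ (indiag_iff.mpr ⟨hr, hpos⟩)
      by_cases hrl : r < l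
      · have hs := hsmall r hrl
        have h12 : T (r, 0) = 1 ∨ T (r, 0) = 2 := by omega
        rw [if_pos hrl]
        rcases h12 with h' | h' <;> simp [h'] <;> omega
      · have hb := hbig r (by omega) hr
        rw [if_neg hrl]
        have hne1 : ¬ (T (r, 0) = 1) := by omega
        have hne2 : ¬ (T (r, 0) = 2) := by omega
        simp only [beq_iff_eq]
        rw [if_neg hne1, if_neg hne2, if_neg (by omega), if_neg (by omega)]
  rw [readingWord_eq_flatMap, List.count_flatMap, List.count_flatMap]
  have hsum1 : ((List.range mu.length).map (List.count 1 ∘ rowW (fun r => mu.getD r 0) T)).sum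
      = ∑ r ∈ Finset.range mu.length, (rowW (fun r => mu.getD r 0) T r).count 1 := rfl
  have hsum2 : ((List.range mu.length).map (List.count 2 ∘ rowW (fun r => mu.getD r 0) T)).sum
      = ∑ r ∈ Finset.range mu.length, (rowW (fun r => mu.getD r 0) T r).count 2 := rfl
  rw [hsum1, hsum2, ← Finset.sum_add_distrib]
  have := Finset.sum_congr rfl (fun r hrr => hrowF r (Finset.mem_range.mp hrr))
  rw [this]
  rw [Finset.range_eq_Ico, ← Finset.sum_Ico_consecutive _ (show (0:ℕ) ≤ 1 by omega) (show 1 ≤ mu.length by omega),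
    ← Finset.sum_Ico_consecutive _ (show (1:ℕ) ≤ l by omega) hl2]
  have e1 : ∑ r ∈ Finset.Ico 0 1, (if r = 0 then mu.getD 0 0 else if r < l then 1 else 0)
      = mu.getD 0 0 := by simp
  have e2 : ∑ r ∈ Finset.Ico 1 l, (if r = 0 then mu.getD 0 0 else if r < l then 1 else 0)
      = l - 1 := by
    have : ∀ r ∈ Finset.Ico 1 l, (if r = 0 then mu.getD 0 0 else if r < l then 1 else 0) = 1 := by
      intro r hrr
      have := Finset.mem_Ico.mp hrr
      rw [if_neg (by omega), if_pos (by omega)]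
    rw [Finset.sum_congr rfl this, Finset.sum_const, Nat.card_Ico, smul_eq_mul, Nat.mul_one]
  have e3 : ∑ r ∈ Finset.Ico l mu.length, (if r = 0 then mu.getD 0 0 else if r < l then 1 else 0)
      = 0 := by
    apply Finset.sum_eq_zero
    intro r hrr
    have := Finset.mem_Ico.mp hrr
    rw [if_neg (by omega), if_neg (by omega)]
  rw [e1, e2, e3]
  omega

lemma colA_sorted (hmu : IsPartitionList mu)
    (hA : IsAmenable mu.length (fun _ => 0) (fun r => mu.getD r 0) T)
    (hC : HasContent mu.length (fun _ => 0) (fun r => mu.getD r 0) T (m :: staircase k))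
    {l : ℕ} (hbig : ∀ r, l ≤ r → r < mu.length → 3 ≤ T (r, 0)) :
    List.Pairwise (· < ·) ((List.range (mu.length - l)).map fun j => T (l + j, 0)) := by
  rw [List.pairwise_iff_getElem]
  intro i j hi hj hij
  simp only [List.length_map, List.length_range] at hi hj
  simp only [List.getElem_map, List.getElem_range]
  have hjlen : l + j < mu.length := by omega
  have hilen : l + i < mu.length := by omega
  have hle : T (l + i, 0) ≤ T (l + j, 0) :=
    col_mono hmu hA (by omega) hjlen (part_pos hmu hjlen)
  have hb1 : 3 ≤ T (l + i, 0) := hbig _ (by omega) hilen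
  rcases cell_cases hA hC hilen (part_pos hmu hilen) with h1 | ⟨v, hv1, hv2⟩
  · omega
  · have hne : T (l + j, 0) ≠ 2 * v := by
      intro heq
      have h6 := hA.2.2.2.2.2.1
      exact h6 (l+i) (l+j) 0 v (by omega) (by omega)
        (indiag_iff.mpr ⟨hilen, part_pos hmu hilen⟩)
        (indiag_iff.mpr ⟨hjlen, part_pos hmu hjlen⟩) ⟨hv2, heq⟩
    omega

lemma gset_subsingleton (m k : ℕ) (hk : 1 ≤ k) (hm : k + 1 ≤ m) (mu : List ℕ)
    (hmu : IsPartitionList mu) : (gSet (m :: staircase k) mu).Subsingleton := by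
  intro T hT T' hT'
  obtain ⟨hA, hC⟩ := hT
  obtain ⟨hA', hC'⟩ := hT'
  have hm1 : (readingWord mu.length (fun _ => 0) (fun r => mu.getD r 0) T).count 2
      + (readingWord mu.length (fun _ => 0) (fun r => mu.getD r 0) T).count 1 = m := by
    have h1 := hC 1 le_rfl
    rw [lam_getD] at h1
    simpa [contentAt] using h1
  have hm1' : (readingWord mu.length (fun _ => 0) (fun r => mu.getD r 0) T').count 2
      + (readingWord mu.length (fun _ => 0) (fun r => mu.getD r 0) T').count 1 = m := by
    have h1 := hC' 1 le_rfl
    rw [lam_getD] at h1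
    simpa [contentAt] using h1
  have h0 : 0 < mu.length := by
    by_contra h
    have hL : mu.length = 0 := by omega
    have : readingWord mu.length (fun _ => 0) (fun r => mu.getD r 0) T = [] := by
      rw [hL]; rfl
    rw [this] at hm1
    simp at hm1
    omega
  obtain ⟨l, hl1, hl2, hsmall, hbig⟩ := exists_l hmu hA hC h0
  obtain ⟨l', hl1', hl2', hsmall', hbig'⟩ := exists_l hmu hA' hC' h0
  have hc12 := count12_w hmu hA hC hl1 hl2 hsmall hbig
  have hc12' := count12_w hmu hA' hC' hl1' hl2' hsmall' hbig'
  have hll' : l = l' := by omega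
  subst hll'
  -- counts of the column lists agree
  have hAcount : ∀ t, ((List.range (mu.length - l)).map fun j => T (l + j, 0)).count t
      = ((List.range (mu.length - l)).map fun j => T' (l + j, 0)).count t := by
    intro t
    by_cases ht : 3 ≤ t
    · have hs := count_w_split hmu hA hC hl1 hl2 hsmall ht
      have hs' := count_w_split hmu hA' hC' hl1 hl2 hsmall' ht
      have hww : (readingWord mu.length (fun _ => 0) (fun r => mu.getD r 0) T).count t
          = (readingWord mu.length (fun _ => 0) (fun r => mu.getD r 0) T').count t := by
        rcases Nat.even_or_odd t with ⟨v, hv⟩ | ⟨j, hj⟩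
        · -- t = 2v, v ≥ 2
          have hv2 : 2 ≤ v := by omega
          have hcv := hC v (by omega)
          have hcv' := hC' v (by omega)
          rw [lam_getD] at hcv hcv'
          unfold contentAt at hcv hcv'
          have hz := no_marked hA hC v hv2
          have hz' := no_marked hA' hC' v hv2
          have htv : t = 2 * v := by omega
          rw [htv]
          omega
        · -- t odd, t = 2j+1 = 2(j+1) - 1 with j+1 ≥ 2
          have hj2 : 2 ≤ j + 1 := by omega
          have hz := no_marked hA hC (j+1) hj2
          have hz' := no_marked hA' hC' (j+1) hj2
          have htj : t = 2 * (j+1) - 1 := by omega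
          rw [htj]
          omega
      omega
    · -- t ≤ 2 : both lists have only entries ≥ 3
      have hz : ∀ (S : ℕ × ℕ → ℕ), (∀ r, l ≤ r → r < mu.length → 3 ≤ S (r, 0)) →
          ((List.range (mu.length - l)).map fun j => S (l + j, 0)).count t = 0 := by
        intro S hS
        rw [List.count_eq_zero]
        intro hmem
        obtain ⟨j, hjmem, hjeq⟩ := List.mem_map.mp hmem
        have hjlt := List.mem_range.mp hjmem
        have := hS (l + j) (by omega) (by omega)
        omega
      rw [hz T hbig, hz T' hbig']
  -- column lists are equal
  haveI : IsAntisymm ℕ (· < ·) := ⟨fun a b h h' => absurd (h.trans h') (lt_irrefl a)⟩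
  have hAA : ((List.range (mu.length - l)).map fun j => T (l + j, 0))
      = ((List.range (mu.length - l)).map fun j => T' (l + j, 0)) :=
    List.Perm.eq_of_pairwise (fun a _ _ _ h h' => absurd (h.trans h') (lt_irrefl a))
      (colA_sorted hmu hA hC hbig) (colA_sorted hmu hA' hC' hbig') (List.perm_iff_count.mpr hAcount)
  have hApt : ∀ j, j < mu.length - l → T (l + j, 0) = T' (l + j, 0) := by
    intro j hj
    have h1 : ((List.range (mu.length - l)).map fun j => T (l + j, 0))[j]?
        = some (T (l + j, 0)) := by
      simp [List.getElem?_map, List.getElem?_range, hj]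
    have h2 : ((List.range (mu.length - l)).map fun j => T' (l + j, 0))[j]?
        = some (T' (l + j, 0)) := by
      simp [List.getElem?_map, List.getElem?_range, hj]
    rw [hAA, h2] at h1
    exact (Option.some.inj h1).symm
  -- final extensionality
  funext p
  obtain ⟨r, c⟩ := p
  by_cases hd : InDiagram mu.length (fun _ => 0) (fun r => mu.getD r 0) (r, c)
  · have hr : r < mu.length := (indiag_iff.mp hd).1
    have hc : c < mu.getD r 0 := (indiag_iff.mp hd).2
    rcases Nat.eq_zero_or_pos c with rfl | hc1
    · -- first column
      by_cases hrl : r < l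
      · rw [col0_pattern hmu hA hC hl1 hl2 hsmall hbig r hrl,
          col0_pattern hmu hA' hC' hl1 hl2 hsmall' hbig' r hrl]
      · have hj : r - l < mu.length - l := by omega
        have := hApt (r - l) hj
        have hrr : l + (r - l) = r := by omega
        rwa [hrr] at this
    · -- c ≥ 1
      rcases Nat.eq_zero_or_pos r with rfl | hr1
      · rw [row0_eq_two hA hC h0 hc1 hc, row0_eq_two hA' hC' h0 hc1 hc]
      · rw [inner_cells hmu hA hC r c hr1 hr hc1 hc,
          inner_cells hmu hA' hC' r c hr1 hr hc1 hc]
  · rw [hA.2.1 _ hd, hA'.2.1 _ hd]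

end Part2

end NSAux

/-- Let `λ = (m, k, k-1, …, 2, 1)` with `m ≥ k + 1 ≥ 2` (a near staircase whose
top row exceeds a staircase of length `k`).  Then every amenable tableau with
content `λ` contains no marked letter i′ (encoded `2*i - 1`) with `i > 1`, and
consequently `g_{λμ} ≤ 1` for every partition `μ` of `m + k(k+1)/2`. -/
theorem near_staircase_top_row_multfree (m k : ℕ) (hk : 1 ≤ k) (hm : k + 1 ≤ m) :
    (∀ (mu : List ℕ) (T : ℕ × ℕ → ℕ), IsPartitionList mu →
        IsAmenable mu.length (fun _ => 0) (fun r => mu.getD r 0) T →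
        HasContent mu.length (fun _ => 0) (fun r => mu.getD r 0) T (m :: staircase k) →
        ∀ p : ℕ × ℕ, InDiagram mu.length (fun _ => 0) (fun r => mu.getD r 0) p →
          ∀ i : ℕ, 2 ≤ i → T p ≠ 2 * i - 1) ∧
    (∀ mu : List ℕ, IsPartitionList mu → mu.sum = m + k * (k + 1) / 2 →
        gCoeff (m :: staircase k) mu ≤ 1) := by
  constructor
  · intro mu T hmu hA hC p hp i hi hTp
    have h0 := NSAux.no_marked hA hC i hi
    rw [List.count_eq_zero] at h0
    apply h0
    obtain ⟨r, c⟩ := p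
    rw [← hTp]
    exact NSAux.mem_readingWord hp
  · intro mu hmu hsum
    have hss := NSAux.gset_subsingleton m k hk hm mu hmu
    rw [gCoeff]
    exact (Set.ncard_le_one hss.finite).mpr fun a ha b hb => hss ha hb
end
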